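/- arXiv:2507.21180 — 4 statements merged into one kernel-verified Lean document; each statement's English description precedes it below -/
import Mathlib

section
/- There is no set G of functions from ℝ⁴ to ℝ⁴ that forms a group under composition and satisfies Scal∘Triv ⊊ G ⊊ Scal∘Poi. -/
/-- Spacetime points: elements of ℝ⁴. -/
abbrev Pt : Type := Fin 4 → ℝ

/-- Lightlike relatedness λ. -/
def lightlike (p q : Pt) : Prop :=
  (p 0 - q 0) ^ 2 = (p 1 - q 1) ^ 2 + (p 2 - q 2) ^ 2 + (p 3 - q 3) ^ 2

/-- Absolute simultaneity S. -/
def simul (p q : Pt) : Prop := p 0 = q 0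

/-- Squared Minkowski length. -/
def sqMink (p : Pt) : ℝ := p 0 ^ 2 - p 1 ^ 2 - p 2 ^ 2 - p 3 ^ 2

/-- Squared Euclidean length. -/
def sqEucl (p : Pt) : ℝ := p 0 ^ 2 + p 1 ^ 2 + p 2 ^ 2 + p 3 ^ 2

/-- Translations of ℝ⁴. -/
def IsTranslation (τ : Pt → Pt) : Prop := ∃ b : Pt, ∀ p, τ p = p + b

/-- Lorentz transformations: bijective linear maps preserving squared Minkowski length. -/
def IsLorentz (L : Pt → Pt) : Prop :=
  IsLinearMap ℝ L ∧ Function.Bijective L ∧ ∀ p, sqMink (L p) = sqMink p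

/-- Poincaré transformations: translations composed with Lorentz transformations. -/
def IsPoincare (P : Pt → Pt) : Prop :=
  ∃ τ L, IsTranslation τ ∧ IsLorentz L ∧ P = τ ∘ L

/-- Euclidean isometries: translations composed with bijective linear maps preserving
squared Euclidean length. -/
def IsEuclIsom (A : Pt → Pt) : Prop :=
  ∃ τ L, IsTranslation τ ∧ IsLinearMap ℝ L ∧ Function.Bijective L ∧
    (∀ p, sqEucl (L p) = sqEucl p) ∧ A = τ ∘ L

/-- Vertical lines: lines parallel to the time axis. -/
def IsVerticalLine (ℓ : Set Pt) : Prop :=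
  ∃ q : Pt, ℓ = {p | p 1 = q 1 ∧ p 2 = q 2 ∧ p 3 = q 3}

/-- Trivial transformations: Euclidean isometries taking vertical lines to vertical lines. -/
def IsTrivial (A : Pt → Pt) : Prop :=
  IsEuclIsom A ∧ ∀ ℓ, IsVerticalLine ℓ → IsVerticalLine (A '' ℓ)

/-- Scalings: maps `p ↦ a • p` with `a ≠ 0`. -/
def IsScaling (D : Pt → Pt) : Prop := ∃ a : ℝ, a ≠ 0 ∧ ∀ p, D p = a • p

/-- The point (1,0,0,0). -/
def unitTime : Pt := fun i => if i = 0 then 1 else 0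

/-- Orthochronous maps: maps not changing the direction of time. -/
def Orthochronous (A : Pt → Pt) : Prop := A unitTime 0 > A 0 0

/-- The set of Poincaré transformations. -/
def Poi : Set (Pt → Pt) := {P | IsPoincare P}

/-- The set of orthochronous Poincaré transformations. -/
def PoiUp : Set (Pt → Pt) := {P | IsPoincare P ∧ Orthochronous P}

/-- The set of trivial transformations. -/
def Triv : Set (Pt → Pt) := {T | IsTrivial T}

/-- The set of orthochronous trivial transformations. -/
def TrivUp : Set (Pt → Pt) := {T | IsTrivial T ∧ Orthochronous T}

/-- The set of scalings. -/
def Scal : Set (Pt → Pt) := {D | IsScaling D}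

/-- Composition of two sets of functions: `H ∘ G = {h ∘ g : h ∈ H, g ∈ G}`. -/
def setComp (H G : Set (Pt → Pt)) : Set (Pt → Pt) := {f | ∃ h ∈ H, ∃ g ∈ G, f = h ∘ g}

/-- A set of functions forms a group under composition. -/
def IsCompGroup (G : Set (Pt → Pt)) : Prop :=
  id ∈ G ∧ (∀ f ∈ G, ∀ g ∈ G, f ∘ g ∈ G) ∧
    ∀ f ∈ G, ∃ g ∈ G, f ∘ g = id ∧ g ∘ f = id

-- AUX START
lemma sqMink_eq (p : Pt) : sqMink p = 2 * (p 0)^2 - sqEucl p := by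
  simp only [sqMink, sqEucl]; ring

def TrivLin (L : Pt → Pt) : Prop :=
  IsLinearMap ℝ L ∧ Function.Bijective L ∧ (∀ p, sqEucl (L p) = sqEucl p) ∧
    ∃ ε : ℝ, ε ^ 2 = 1 ∧ ∀ p, L p 0 = ε * p 0

lemma trivLin_id : TrivLin (id : Pt → Pt) :=
  ⟨⟨fun _ _ => rfl, fun _ _ => rfl⟩, Function.bijective_id, fun _ => rfl,
    1, by norm_num, fun _ => (one_mul _).symm⟩

lemma TrivLin.lorentz {L : Pt → Pt} (h : TrivLin L) : IsLorentz L := by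
  obtain ⟨hlin, hbij, heucl, ε, hε, ht⟩ := h
  refine ⟨hlin, hbij, fun p => ?_⟩
  have h1 : (L p 0) ^ 2 = (p 0) ^ 2 := by rw [ht]; rw [mul_pow, hε, one_mul]
  rw [sqMink_eq, sqMink_eq, heucl, h1]

lemma TrivLin.comp {L1 L2 : Pt → Pt} (h1 : TrivLin L1) (h2 : TrivLin L2) :
    TrivLin (L1 ∘ L2) := by
  obtain ⟨l1, b1, e1, ε1, hε1, t1⟩ := h1
  obtain ⟨l2, b2, e2, ε2, hε2, t2⟩ := h2
  refine ⟨⟨fun p q => ?_, fun c p => ?_⟩, b1.comp b2, fun p => ?_, ε1 * ε2, ?_, fun p => ?_⟩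
  · simp only [Function.comp_apply, l2.map_add, l1.map_add]
  · simp only [Function.comp_apply, l2.map_smul, l1.map_smul]
  · simp only [Function.comp_apply, e1, e2]
  · rw [mul_pow, hε1, hε2, one_mul]
  · simp only [Function.comp_apply, t1, t2]; ring

lemma TrivLin.inv {L : Pt → Pt} (h : TrivLin L) :
    ∃ L', TrivLin L' ∧ L ∘ L' = id ∧ L' ∘ L = id := by
  obtain ⟨hlin, hbij, heucl, ε, hε, ht⟩ := h
  let e : Pt ≃ₗ[ℝ] Pt := LinearEquiv.ofBijective (IsLinearMap.mk' L hlin) hbij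
  have he : ∀ p, e p = L p := fun p => rfl
  refine ⟨fun p => e.symm p, ⟨⟨fun p q => ?_, fun c p => ?_⟩, e.symm.bijective, fun p => ?_, ε, hε, fun p => ?_⟩, ?_, ?_⟩
  · exact e.symm.map_add p q
  · exact e.symm.map_smul c p
  · have := heucl (e.symm p)
    rw [← he, e.apply_symm_apply] at this; exact this.symm
  · have h0 : L (e.symm p) 0 = ε * (e.symm p) 0 := ht _
    rw [← he, e.apply_symm_apply] at h0
    have : ε * p 0 = ε * (ε * e.symm p 0) := by rw [← h0]
    rw [this, ← mul_assoc, ← sq, hε, one_mul]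
  · funext p; simp only [Function.comp_apply, id_eq, ← he, e.apply_symm_apply]
  · funext p; simp only [Function.comp_apply, id_eq, ← he, e.symm_apply_apply]

lemma TrivLin.unit_img {L : Pt → Pt} (hlin : IsLinearMap ℝ L)
    (heucl : ∀ p, sqEucl (L p) = sqEucl p) {ε : ℝ} (hε : ε ^ 2 = 1)
    (ht : ∀ p, L p 0 = ε * p 0) : L unitTime = ε • unitTime := by
  have h1 : sqEucl (L unitTime) = 1 := by
    rw [heucl]; simp [sqEucl, unitTime]
  have h0 : L unitTime 0 = ε := by rw [ht]; simp [unitTime]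
  have hsum : (L unitTime 1)^2 + (L unitTime 2)^2 + (L unitTime 3)^2 = 0 := by
    simp only [sqEucl, h0] at h1; linarith [hε]
  funext i
  fin_cases i
  · simp [h0, unitTime]
  · have : L unitTime 1 = 0 := by nlinarith [sq_nonneg (L unitTime 1), sq_nonneg (L unitTime 2), sq_nonneg (L unitTime 3)]
    simp [this, unitTime]
  · have : L unitTime 2 = 0 := by nlinarith [sq_nonneg (L unitTime 1), sq_nonneg (L unitTime 2), sq_nonneg (L unitTime 3)]
    simp [this, unitTime]
  · have : L unitTime 3 = 0 := by nlinarith [sq_nonneg (L unitTime 1), sq_nonneg (L unitTime 2), sq_nonneg (L unitTime 3)]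
    simp [this, unitTime]

lemma TrivLin.isTrivial {L : Pt → Pt} (h : TrivLin L) : IsTrivial L := by
  obtain ⟨hlin, hbij, heucl, ε, hε, ht⟩ := h
  have hu : L unitTime = ε • unitTime := TrivLin.unit_img hlin heucl hε ht
  constructor
  · exact ⟨id, L, ⟨0, fun p => (add_zero p).symm⟩, hlin, hbij, heucl, rfl⟩
  · rintro ℓ ⟨q, rfl⟩
    set q' : Pt := fun i => if i = 0 then 0 else q i with hq'
    refine ⟨L q', ?_⟩
    have hdecomp : ∀ p : Pt, p 1 = q 1 ∧ p 2 = q 2 ∧ p 3 = q 3 → p = q' + (p 0) • unitTime := by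
      rintro p ⟨h1, h2, h3⟩
      funext i; fin_cases i <;> simp [hq', unitTime, h1, h2, h3]
    ext r
    constructor
    · rintro ⟨p, hp, rfl⟩
      have := hdecomp p hp
      rw [this, hlin.map_add, hlin.map_smul, hu, smul_smul]
      refine ⟨?_, ?_, ?_⟩ <;> simp [unitTime]
    · intro hr
      obtain ⟨h1, h2, h3⟩ := hr
      refine ⟨q' + (ε * (r 0 - L q' 0)) • unitTime, ?_, ?_⟩
      · refine ⟨?_, ?_, ?_⟩ <;> simp [hq', unitTime]
      · rw [hlin.map_add, hlin.map_smul, hu, smul_smul]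
        have hee : ε * (r 0 - L q' 0) * ε = r 0 - L q' 0 := by
          have : ε * (r 0 - L q' 0) * ε = ε^2 * (r 0 - L q' 0) := by ring
          rw [this, hε, one_mul]
        rw [hee]
        funext i; fin_cases i
        · simp [unitTime]
        · simpa [unitTime] using h1.symm
        · simpa [unitTime] using h2.symm
        · simpa [unitTime] using h3.symm

lemma isTrivial_translation (b : Pt) : IsTrivial (fun p => p + b) := by
  constructor
  · exact ⟨fun p => p + b, id, ⟨b, fun p => rfl⟩, ⟨fun _ _ => rfl, fun _ _ => rfl⟩,
      Function.bijective_id, fun _ => rfl, rfl⟩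
  · rintro ℓ ⟨q, rfl⟩
    refine ⟨q + b, ?_⟩
    ext r
    constructor
    · rintro ⟨p, ⟨h1, h2, h3⟩, rfl⟩
      refine ⟨?_, ?_, ?_⟩ <;> simp [h1, h2, h3]
    · rintro ⟨h1, h2, h3⟩
      refine ⟨r - b, ⟨?_, ?_, ?_⟩, by funext i; simp⟩ <;>
        simp only [Pi.sub_apply, Pi.add_apply] at * <;> linarith

lemma IsTrivial.comp {A B : Pt → Pt} (hA : IsTrivial A) (hB : IsTrivial B) :
    IsTrivial (A ∘ B) := by
  obtain ⟨⟨τ1, L1, ⟨b1, hb1⟩, l1, bij1, e1, rfl⟩, v1⟩ := hA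
  obtain ⟨⟨τ2, L2, ⟨b2, hb2⟩, l2, bij2, e2, rfl⟩, v2⟩ := hB
  constructor
  · refine ⟨fun p => p + (L1 b2 + b1), L1 ∘ L2, ⟨L1 b2 + b1, fun p => rfl⟩,
      ⟨fun p q => by simp [l2.map_add, l1.map_add], fun c p => by simp [l2.map_smul, l1.map_smul]⟩,
      bij1.comp bij2, fun p => by simp [e1, e2], ?_⟩
    funext p
    simp only [Function.comp_apply, hb1, hb2, l1.map_add]
    abel
  · intro ℓ hℓ
    rw [Set.image_comp]
    exact v1 _ (v2 _ hℓ)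

-- PART 2
def mdot (p q : Pt) : ℝ := p 0 * q 0 - p 1 * q 1 - p 2 * q 2 - p 3 * q 3

lemma lorentz_mdot {L : Pt → Pt} (h : IsLorentz L) (p q : Pt) :
    mdot (L p) (L q) = mdot p q := by
  obtain ⟨hlin, -, hm⟩ := h
  have h1 := hm (p + q)
  have h2 := hm p
  have h3 := hm q
  rw [hlin.map_add] at h1
  simp only [sqMink, mdot, Pi.add_apply] at *
  linear_combination (h1 - h2 - h3) / 2

lemma lorentz_comp {f g : Pt → Pt} (hf : IsLorentz f) (hg : IsLorentz g) :
    IsLorentz (f ∘ g) := by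
  obtain ⟨l1, b1, m1⟩ := hf
  obtain ⟨l2, b2, m2⟩ := hg
  exact ⟨⟨fun p q => by simp [l2.map_add, l1.map_add], fun c p => by simp [l2.map_smul, l1.map_smul]⟩,
    b1.comp b2, fun p => by simp [m1, m2]⟩

lemma lorentz_fix_unitTime {N : Pt → Pt} (hN : IsLorentz N)
    (h0 : N unitTime = unitTime) : TrivLin N := by
  have ht : ∀ p, N p 0 = p 0 := by
    intro p
    have := lorentz_mdot hN p unitTime
    rw [h0] at this
    simpa [mdot, unitTime] using this
  refine ⟨hN.1, hN.2.1, fun p => ?_, 1, by norm_num, fun p => by rw [ht, one_mul]⟩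
  have := hN.2.2 p
  rw [sqMink_eq, sqMink_eq, ht] at this
  linarith

-- boost
noncomputable def Bo (χ : ℝ) : Pt → Pt := fun p =>
  ![p 0 * Real.cosh χ + p 1 * Real.sinh χ, p 0 * Real.sinh χ + p 1 * Real.cosh χ, p 2, p 3]

lemma Bo_comp (a b : ℝ) : Bo a ∘ Bo b = Bo (a + b) := by
  funext p i
  fin_cases i <;>
    simp [Bo, Real.cosh_add, Real.sinh_add] <;> ring

lemma Bo_zero : Bo 0 = id := by
  funext p i
  fin_cases i <;> simp [Bo]

lemma Bo_lorentz (χ : ℝ) : IsLorentz (Bo χ) := by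
  refine ⟨⟨fun p q => ?_, fun c p => ?_⟩, ?_, fun p => ?_⟩
  · funext i; fin_cases i <;> simp [Bo] <;> ring
  · funext i; fin_cases i <;> simp [Bo] <;> ring
  · rw [Function.bijective_iff_has_inverse]
    refine ⟨Bo (-χ), fun p => ?_, fun p => ?_⟩
    · have := congrFun (Bo_comp (-χ) χ) p
      rwa [neg_add_cancel, Bo_zero] at this
    · have := congrFun (Bo_comp χ (-χ)) p
      rwa [add_neg_cancel, Bo_zero] at this
  · have h := Real.cosh_sq_sub_sinh_sq χ
    simp only [sqMink, Bo]
    show (p 0 * Real.cosh χ + p 1 * Real.sinh χ)^2 - (p 0 * Real.sinh χ + p 1 * Real.cosh χ)^2 - (p 2)^2 - (p 3)^2 = _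
    linear_combination (p 0 ^ 2 - p 1 ^ 2) * h

-- rotation in the (1,2)-plane
noncomputable def Ro (θ : ℝ) : Pt → Pt := fun p =>
  ![p 0, p 1 * Real.cos θ - p 2 * Real.sin θ, p 1 * Real.sin θ + p 2 * Real.cos θ, p 3]

lemma Ro_comp (a b : ℝ) : Ro a ∘ Ro b = Ro (a + b) := by
  funext p i
  fin_cases i <;> simp [Ro, Real.cos_add, Real.sin_add] <;> ring

lemma Ro_zero : Ro 0 = id := by
  funext p i
  fin_cases i <;> simp [Ro]

lemma Ro_trivLin (θ : ℝ) : TrivLin (Ro θ) := by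
  have hsc := Real.sin_sq_add_cos_sq θ
  refine ⟨⟨fun p q => ?_, fun c p => ?_⟩, ?_, fun p => ?_, 1, by norm_num, fun p => by simp [Ro]⟩
  · funext i; fin_cases i <;> simp [Ro] <;> ring
  · funext i; fin_cases i <;> simp [Ro] <;> ring
  · rw [Function.bijective_iff_has_inverse]
    refine ⟨Ro (-θ), fun p => ?_, fun p => ?_⟩
    · have := congrFun (Ro_comp (-θ) θ) p
      rwa [neg_add_cancel, Ro_zero] at this
    · have := congrFun (Ro_comp θ (-θ)) p
      rwa [add_neg_cancel, Ro_zero] at this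
  · simp only [sqEucl, Ro]
    show (p 0)^2 + (p 1 * Real.cos θ - p 2 * Real.sin θ)^2 + (p 1 * Real.sin θ + p 2 * Real.cos θ)^2 + (p 3)^2 = _
    linear_combination (p 1 ^ 2 + p 2 ^ 2) * hsc

-- time scaling by ±1
def Ts (a : ℝ) : Pt → Pt := fun p => ![a * p 0, p 1, p 2, p 3]

lemma Ts_trivLin {a : ℝ} (h : a ^ 2 = 1) : TrivLin (Ts a) := by
  refine ⟨⟨fun p q => ?_, fun c p => ?_⟩, ?_, fun p => ?_, a, h, fun p => by simp [Ts]⟩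
  · funext i; fin_cases i <;> simp [Ts] <;> ring
  · funext i; fin_cases i <;> simp [Ts] <;> ring
  · rw [Function.bijective_iff_has_inverse]
    refine ⟨Ts a, fun p => ?_, fun p => ?_⟩ <;>
      · funext i
        fin_cases i <;> simp [Ts] <;> linear_combination p 0 * h
  · simp only [sqEucl, Ts]
    show (a * p 0)^2 + (p 1)^2 + (p 2)^2 + (p 3)^2 = _
    linear_combination (p 0 ^ 2) * h

-- PART 3: Householder reflection in the spatial coordinates
def edot (p q : Pt) : ℝ := p 0 * q 0 + p 1 * q 1 + p 2 * q 2 + p 3 * q 3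

noncomputable def Hh (w : Pt) : Pt → Pt := fun p => p - (2 * edot p w / edot w w) • w

lemma edot_self_zero {w : Pt} (h : edot w w = 0) : w = 0 := by
  simp only [edot] at h
  have e0 : w 0 = 0 := pow_eq_zero_iff two_ne_zero |>.1 <|
    le_antisymm (by nlinarith [sq_nonneg (w 1), sq_nonneg (w 2), sq_nonneg (w 3)]) (sq_nonneg _)
  have e1 : w 1 = 0 := pow_eq_zero_iff two_ne_zero |>.1 <|
    le_antisymm (by nlinarith [sq_nonneg (w 0), sq_nonneg (w 2), sq_nonneg (w 3)]) (sq_nonneg _)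
  have e2 : w 2 = 0 := pow_eq_zero_iff two_ne_zero |>.1 <|
    le_antisymm (by nlinarith [sq_nonneg (w 0), sq_nonneg (w 1), sq_nonneg (w 3)]) (sq_nonneg _)
  have e3 : w 3 = 0 := pow_eq_zero_iff two_ne_zero |>.1 <|
    le_antisymm (by nlinarith [sq_nonneg (w 0), sq_nonneg (w 1), sq_nonneg (w 2)]) (sq_nonneg _)
  funext i
  fin_cases i
  · exact e0
  · exact e1
  · exact e2
  · exact e3

lemma Hh_eq_id {w : Pt} (h : edot w w = 0) : Hh w = id := by
  funext p
  simp [Hh, h]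

lemma edot_sub_smul (p w v : Pt) (c : ℝ) :
    edot (p - c • w) v = edot p v - c * edot w v := by
  simp only [edot, Pi.sub_apply, Pi.smul_apply, smul_eq_mul]
  ring

lemma edot_add_left (p q v : Pt) : edot (p + q) v = edot p v + edot q v := by
  simp only [edot, Pi.add_apply]
  ring

lemma edot_smul_left (c : ℝ) (p v : Pt) : edot (c • p) v = c * edot p v := by
  simp only [edot, Pi.smul_apply, smul_eq_mul]
  ring

lemma sqEucl_sub_smul (p w : Pt) (c : ℝ) :
    sqEucl (p - c • w) = sqEucl p - 2 * c * edot p w + c ^ 2 * edot w w := by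
  simp only [sqEucl, edot, Pi.sub_apply, Pi.smul_apply, smul_eq_mul]
  ring

lemma Hh_trivLin {w : Pt} (hw : w 0 = 0) : TrivLin (Hh w) := by
  rcases eq_or_ne (edot w w) 0 with h | h
  · rw [Hh_eq_id h]; exact trivLin_id
  · have he : ∀ p, edot (Hh w p) w = - edot p w := by
      intro p
      show edot (p - (2 * edot p w / edot w w) • w) w = - edot p w
      rw [edot_sub_smul]
      field_simp
      ring
    have hinv : ∀ p, Hh w (Hh w p) = p := by
      intro p
      show Hh w p - (2 * edot (Hh w p) w / edot w w) • w = p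
      rw [he]
      show p - (2 * edot p w / edot w w) • w - (2 * -edot p w / edot w w) • w = p
      have hc : 2 * -edot p w / edot w w = -(2 * edot p w / edot w w) := by ring
      rw [hc, neg_smul, sub_neg_eq_add, sub_add_cancel]
    refine ⟨⟨fun p q => ?_, fun c p => ?_⟩, ?_, fun p => ?_, 1, by norm_num, fun p => ?_⟩
    · show (p + q) - (2 * edot (p + q) w / edot w w) • w = Hh w p + Hh w q
      rw [edot_add_left]
      funext i
      simp only [Hh, Pi.sub_apply, Pi.add_apply, Pi.smul_apply, smul_eq_mul]
      ring
    · show (c • p) - (2 * edot (c • p) w / edot w w) • w = c • Hh w p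
      rw [edot_smul_left]
      funext i
      simp only [Hh, Pi.sub_apply, Pi.smul_apply, smul_eq_mul]
      ring
    · rw [Function.bijective_iff_has_inverse]
      exact ⟨Hh w, hinv, hinv⟩
    · show sqEucl (p - (2 * edot p w / edot w w) • w) = sqEucl p
      rw [sqEucl_sub_smul]
      field_simp
      ring
    · show (p - (2 * edot p w / edot w w) • w) 0 = 1 * p 0
      simp only [Pi.sub_apply, Pi.smul_apply, smul_eq_mul, hw, mul_zero, sub_zero, one_mul]

lemma Hh_spec {w u : Pt} (hcond : edot w w = 2 * edot u w) : Hh w u = u - w := by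
  rcases eq_or_ne (edot w w) 0 with h | h
  · rw [Hh_eq_id h, edot_self_zero h, sub_zero, id_eq]
  · have hc : 2 * edot u w / edot w w = 1 := by
      rw [← hcond, div_self h]
    show u - (2 * edot u w / edot w w) • w = u - w
    rw [hc, one_smul]

-- the decomposition lemma
lemma decomp {M : Pt → Pt} (hM : IsLorentz M) :
    ∃ χ T1 T2, 0 ≤ χ ∧ Real.cosh χ = |M unitTime 0| ∧ TrivLin T1 ∧ TrivLin T2 ∧
      M = T1 ∘ Bo χ ∘ T2 := by
  obtain ⟨hlin, hbij, hmink⟩ := hM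
  set u := M unitTime with hu
  have hmu : sqMink u = 1 := by
    rw [hu, hmink]; simp [sqMink, unitTime]
  set r := Real.sqrt (u 1 ^ 2 + u 2 ^ 2 + u 3 ^ 2) with hr
  have hr0 : 0 ≤ r := Real.sqrt_nonneg _
  have hr2 : r ^ 2 = u 1 ^ 2 + u 2 ^ 2 + u 3 ^ 2 := Real.sq_sqrt (by positivity)
  have hu0 : u 0 ^ 2 = 1 + r ^ 2 := by
    simp only [sqMink] at hmu; rw [hr2]; linarith
  have habs : 1 ≤ |u 0| := by nlinarith [sq_abs (u 0), abs_nonneg (u 0)]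
  set χ := Real.log (|u 0| + r) with hχ
  have hexp : Real.exp χ = |u 0| + r := Real.exp_log (by linarith)
  have hgeo : (|u 0| + r) * (|u 0| - r) = 1 := by nlinarith [sq_abs (u 0)]
  have hexpneg : Real.exp (-χ) = |u 0| - r := by
    rw [Real.exp_neg, hexp]
    exact inv_eq_of_mul_eq_one_right hgeo
  have hch : Real.cosh χ = |u 0| := by rw [Real.cosh_eq, hexp, hexpneg]; ring
  have hsh : Real.sinh χ = r := by rw [Real.sinh_eq, hexp, hexpneg]; ring
  have hχ0 : 0 ≤ χ := Real.log_nonneg (by linarith)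
  set w : Pt := ![0, u 1 - r, u 2, u 3] with hw
  have hw0 : w 0 = 0 := rfl
  have hcond : edot w w = 2 * edot u w := by
    simp only [edot, hw]
    show (0:ℝ) * 0 + (u 1 - r) * (u 1 - r) + u 2 * u 2 + u 3 * u 3 =
      2 * (u 0 * 0 + u 1 * (u 1 - r) + u 2 * u 2 + u 3 * u 3)
    linear_combination hr2
  have hHu : Hh w u = u - w := Hh_spec hcond
  set sg : ℝ := if 0 ≤ u 0 then (1:ℝ) else -1 with hsg
  have hsg2 : sg ^ 2 = 1 := by rw [hsg]; split <;> norm_num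
  have hsgu : sg * u 0 = |u 0| := by
    rw [hsg]; split
    · rw [one_mul, abs_of_nonneg ‹_›]
    · rw [abs_of_neg (by linarith [lt_of_not_ge ‹¬ 0 ≤ u 0›])]; ring
  have hEtl : TrivLin (Ts sg ∘ Hh w) := (Ts_trivLin hsg2).comp (Hh_trivLin hw0)
  have hEu : (Ts sg ∘ Hh w) u = ![Real.cosh χ, Real.sinh χ, 0, 0] := by
    rw [Function.comp_apply, hHu]
    funext i
    fin_cases i
    · show sg * (u - w) 0 = Real.cosh χ
      rw [hch, ← hsgu]
      have : (u - w) 0 = u 0 - w 0 := rfl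
      rw [this, hw0, sub_zero]
    · show (u - w) 1 = Real.sinh χ
      rw [hsh]
      show u 1 - (u 1 - r) = r
      ring
    · show (u - w) 2 = (0:ℝ)
      show u 2 - u 2 = (0:ℝ)
      ring
    · show (u - w) 3 = (0:ℝ)
      show u 3 - u 3 = (0:ℝ)
      ring
  obtain ⟨E', hE'tl, hEE', hE'E⟩ := hEtl.inv
  have hNlor : IsLorentz (Bo (-χ) ∘ ((Ts sg ∘ Hh w) ∘ M)) :=
    lorentz_comp (Bo_lorentz _) (lorentz_comp hEtl.lorentz ⟨hlin, hbij, hmink⟩)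
  have hNu : (Bo (-χ) ∘ ((Ts sg ∘ Hh w) ∘ M)) unitTime = unitTime := by
    have h1 := Real.cosh_sq_sub_sinh_sq χ
    show Bo (-χ) ((Ts sg ∘ Hh w) (M unitTime)) = unitTime
    rw [← hu, hEu]
    funext i
    fin_cases i
    · show Real.cosh χ * Real.cosh (-χ) + Real.sinh χ * Real.sinh (-χ) = unitTime 0
      rw [Real.cosh_neg, Real.sinh_neg]
      show _ = (1:ℝ)
      nlinarith [h1]
    · show Real.cosh χ * Real.sinh (-χ) + Real.sinh χ * Real.cosh (-χ) = unitTime 1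
      rw [Real.cosh_neg, Real.sinh_neg]
      show _ = (0:ℝ)
      ring
    · show (0:ℝ) = unitTime 2
      rfl
    · show (0:ℝ) = unitTime 3
      rfl
  have hNtl : TrivLin (Bo (-χ) ∘ ((Ts sg ∘ Hh w) ∘ M)) := lorentz_fix_unitTime hNlor hNu
  refine ⟨χ, E', Bo (-χ) ∘ ((Ts sg ∘ Hh w) ∘ M), hχ0, by rw [hch, hu], hE'tl, hNtl, ?_⟩
  funext p
  show M p = E' (Bo χ ((Bo (-χ) ∘ ((Ts sg ∘ Hh w) ∘ M)) p))
  have h2 : Bo χ ((Bo (-χ) ∘ ((Ts sg ∘ Hh w) ∘ M)) p) = (Ts sg ∘ Hh w) (M p) := by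
    show Bo χ (Bo (-χ) ((Ts sg ∘ Hh w) (M p))) = (Ts sg ∘ Hh w) (M p)
    have := congrFun (Bo_comp χ (-χ)) ((Ts sg ∘ Hh w) (M p))
    rwa [add_neg_cancel, Bo_zero] at this
  rw [h2]
  exact (congrFun hE'E (M p)).symm


/-- There is no group (under composition) of functions from ℝ⁴ to ℝ⁴ lying strictly
between Scal∘Triv and Scal∘Poi. -/
theorem no_group_between_scalTriv_scalPoi :
    ¬ ∃ G : Set (Pt → Pt), IsCompGroup G ∧ setComp Scal Triv ⊂ G ∧ G ⊂ setComp Scal Poi := by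
  rintro ⟨G, ⟨hid, hcomp, -⟩, hss1, hss2⟩
  rw [ssubset_iff_subset_not_subset] at hss1 hss2
  obtain ⟨hsub1, hne1⟩ := hss1
  obtain ⟨hsub2, hne2⟩ := hss2
  -- trivial maps and scalings belong to G
  have hTrivG : ∀ T : Pt → Pt, IsTrivial T → T ∈ G := by
    intro T hT
    exact hsub1 ⟨id, ⟨1, one_ne_zero, fun p => (one_smul ℝ p).symm⟩, T, hT,
      (Function.id_comp T).symm⟩
  have hScalG : ∀ a : ℝ, a ≠ 0 → (fun p : Pt => a • p) ∈ G := by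
    intro a ha
    exact hsub1 ⟨fun p : Pt => a • p, ⟨a, ha, fun p => rfl⟩, id, trivLin_id.isTrivial, rfl⟩
  -- get a non-trivial element of G
  obtain ⟨f, hfG, hfns⟩ := Set.not_subset.1 hne1
  obtain ⟨D, ⟨a, ha, hD⟩, P, ⟨τ, L, ⟨b, hb⟩, hLor, hP⟩, hf⟩ := hsub2 hfG
  -- strip the scaling and the translation: L ∈ G
  have hstep1 : (fun p : Pt => a⁻¹ • p) ∘ f ∈ G :=
    hcomp _ (hScalG a⁻¹ (inv_ne_zero ha)) f hfG
  have heq1 : (fun p : Pt => a⁻¹ • p) ∘ f = τ ∘ L := by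
    funext p
    simp only [Function.comp_apply, hf, hD, hP, smul_smul, inv_mul_cancel₀ ha, one_smul]
  have hstep2 : (fun p : Pt => p + (-b)) ∘ (τ ∘ L) ∈ G :=
    hcomp _ (hTrivG _ (isTrivial_translation (-b))) _ (heq1 ▸ hstep1)
  have heqL : (fun p : Pt => p + (-b)) ∘ (τ ∘ L) = L := by
    funext p
    simp only [Function.comp_apply, hb]
    abel
  have hLG : L ∈ G := heqL ▸ hstep2
  have hτtriv : IsTrivial τ := by
    rw [show τ = fun p => p + b from funext hb]
    exact isTrivial_translation b
  have hLnt : ¬ IsTrivial L := by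
    intro hLt
    exact hfns ⟨D, ⟨a, ha, hD⟩, τ ∘ L, hτtriv.comp hLt, by rw [hf, hP]⟩
  -- decompose L: get a boost with positive rapidity in G
  obtain ⟨χ0, T1, T2, hχ00, hcosh0, hT1, hT2, hLdec⟩ := decomp hLor
  have hχ0pos : 0 < χ0 := by
    rcases lt_or_eq_of_le hχ00 with h | h
    · exact h
    · exfalso
      apply hLnt
      rw [hLdec, ← h, Bo_zero]
      have : (T1 ∘ id ∘ T2) = T1 ∘ T2 := rfl
      rw [this]
      exact (hT1.comp hT2).isTrivial
  obtain ⟨T1', hT1', hT1i, hT1i'⟩ := hT1.inv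
  obtain ⟨T2', hT2', hT2i, hT2i'⟩ := hT2.inv
  have hBχ0 : Bo χ0 ∈ G := by
    have h1 : T1' ∘ L ∈ G := hcomp _ (hTrivG _ hT1'.isTrivial) _ hLG
    have h2 : (T1' ∘ L) ∘ T2' ∈ G := hcomp _ h1 _ (hTrivG _ hT2'.isTrivial)
    have h3 : (T1' ∘ L) ∘ T2' = Bo χ0 := by
      rw [hLdec]
      funext p
      show T1' (T1 (Bo χ0 (T2 (T2' p)))) = Bo χ0 p
      rw [show T2 (T2' p) = p from congrFun hT2i p]
      exact congrFun hT1i' (Bo χ0 p)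
    rw [← h3]
    exact h2
  -- interval step
  have hs0 : 0 < Real.sinh χ0 := Real.sinh_pos_iff.2 hχ0pos
  have hint : ∀ δ : ℝ, 0 ≤ δ → δ ≤ 2 * χ0 → Bo δ ∈ G := by
    intro δ hδ0 hδle
    have hs2 : 0 < Real.sinh χ0 ^ 2 := by positivity
    set x : ℝ := (Real.cosh δ - Real.cosh χ0 ^ 2) / Real.sinh χ0 ^ 2 with hx
    have hcosh2 : Real.cosh (2 * χ0) = Real.cosh χ0 ^ 2 + Real.sinh χ0 ^ 2 := by
      rw [two_mul, Real.cosh_add]; ring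
    have hcoshle : Real.cosh δ ≤ Real.cosh χ0 ^ 2 + Real.sinh χ0 ^ 2 := by
      rw [← hcosh2]
      exact Real.cosh_le_cosh.2 (by
        rw [abs_of_nonneg hδ0, abs_of_nonneg (by linarith : (0:ℝ) ≤ 2 * χ0)]
        exact hδle)
    have hid1 := Real.cosh_sq_sub_sinh_sq χ0
    have hx1 : -1 ≤ x := by
      rw [hx, le_div_iff₀ hs2]
      have := Real.one_le_cosh δ
      nlinarith
    have hx2 : x ≤ 1 := by
      rw [hx, div_le_iff₀ hs2]
      nlinarith
    set θ := Real.arccos x with hθ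
    have hcosθ : Real.cos θ = x := Real.cos_arccos hx1 hx2
    have hMmG : Bo χ0 ∘ (Ro θ ∘ Bo χ0) ∈ G :=
      hcomp _ hBχ0 _ (hcomp _ (hTrivG _ (Ro_trivLin θ).isTrivial) _ hBχ0)
    have hMlor : IsLorentz (Bo χ0 ∘ (Ro θ ∘ Bo χ0)) :=
      lorentz_comp (Bo_lorentz _) (lorentz_comp (Ro_trivLin θ).lorentz (Bo_lorentz _))
    have hM0 : (Bo χ0 ∘ (Ro θ ∘ Bo χ0)) unitTime 0 = Real.cosh δ := by
      show Bo χ0 (Ro θ (Bo χ0 unitTime)) 0 = Real.cosh δ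
      have h1 : Bo χ0 unitTime = ![Real.cosh χ0, Real.sinh χ0, 0, 0] := by
        funext i
        fin_cases i <;> simp [Bo, unitTime]
      rw [h1]
      have h2 : Ro θ ![Real.cosh χ0, Real.sinh χ0, 0, 0] =
          ![Real.cosh χ0, Real.sinh χ0 * Real.cos θ, Real.sinh χ0 * Real.sin θ, 0] := by
        funext i
        fin_cases i <;> simp [Ro]
      rw [h2]
      show Real.cosh χ0 * Real.cosh χ0 + Real.sinh χ0 * Real.cos θ * Real.sinh χ0 = Real.cosh δ
      rw [hcosθ, hx]
      field_simp
      ring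
    obtain ⟨χ', S1, S2, hχ', hcosh', hS1, hS2, hMdec⟩ := decomp hMlor
    have hcc : Real.cosh χ' = Real.cosh δ := by
      rw [hcosh', hM0, abs_of_nonneg (by positivity : (0:ℝ) ≤ Real.cosh δ)]
    have hχδ : χ' = δ := by
      have h1 : Real.sinh χ' ^ 2 = Real.sinh δ ^ 2 := by
        have a1 := Real.cosh_sq_sub_sinh_sq χ'
        have a2 := Real.cosh_sq_sub_sinh_sq δ
        nlinarith
      have ha : 0 ≤ Real.sinh χ' := Real.sinh_nonneg_iff.2 hχ'
      have hb' : 0 ≤ Real.sinh δ := Real.sinh_nonneg_iff.2 hδ0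
      have h2 : Real.sinh χ' = Real.sinh δ := by
        have h3 : (Real.sinh χ' - Real.sinh δ) * (Real.sinh χ' + Real.sinh δ) = 0 := by
          linear_combination h1
        rcases mul_eq_zero.1 h3 with h4 | h4
        · linarith
        · linarith
      exact Real.sinh_injective h2
    obtain ⟨S1', hS1', hS1i, hS1i'⟩ := hS1.inv
    obtain ⟨S2', hS2', hS2i, hS2i'⟩ := hS2.inv
    have h4 : (S1' ∘ (Bo χ0 ∘ (Ro θ ∘ Bo χ0))) ∘ S2' = Bo δ := by
      rw [hMdec]
      funext p
      show S1' (S1 (Bo χ' (S2 (S2' p)))) = Bo δ p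
      rw [show S2 (S2' p) = p from congrFun hS2i p, hχδ]
      exact congrFun hS1i' (Bo δ p)
    rw [← h4]
    exact hcomp _ (hcomp _ (hTrivG _ hS1'.isTrivial) _ hMmG) _ (hTrivG _ hS2'.isTrivial)
  -- multiples
  have hmul : ∀ n : ℕ, ∀ δ : ℝ, Bo δ ∈ G → Bo (n * δ) ∈ G := by
    intro n
    induction n with
    | zero => intro δ _; rw [Nat.cast_zero, zero_mul, Bo_zero]; exact hid
    | succ k ih =>
      intro δ hδ
      have h1 := hcomp _ (ih δ hδ) _ hδ
      rw [Bo_comp] at h1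
      have h2 : (k : ℝ) * δ + δ = ((k + 1 : ℕ) : ℝ) * δ := by push_cast; ring
      rwa [h2] at h1
  -- all nonnegative rapidities
  have key : ∀ μ : ℝ, 0 ≤ μ → Bo μ ∈ G := by
    intro μ hμ
    set n : ℕ := ⌈μ / (2 * χ0)⌉₊ + 1 with hn
    have hnpos : (0:ℝ) < n := by positivity
    have hle : μ / (2 * χ0) ≤ (n : ℝ) := by
      have := Nat.le_ceil (μ / (2 * χ0))
      push_cast [hn]
      push_cast at this
      linarith
    have hδ0 : 0 ≤ μ / n := div_nonneg hμ (le_of_lt hnpos)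
    have hδle : μ / n ≤ 2 * χ0 := by
      rw [div_le_iff₀ hnpos]
      rw [div_le_iff₀ (by linarith : (0:ℝ) < 2 * χ0)] at hle
      linarith
    have hBδ := hint _ hδ0 hδle
    have := hmul n _ hBδ
    rwa [mul_div_cancel₀ μ (ne_of_gt hnpos)] at this
  -- every element of Scal ∘ Poi is in G: contradiction
  apply hne2
  rintro g ⟨D₂, ⟨a₂, ha₂, hD₂⟩, P₂, ⟨τ₂, M₂, ⟨b₂, hb₂⟩, hM₂lor, hP₂⟩, hg'⟩
  obtain ⟨μ, U1, U2, hμ0, -, hU1, hU2, hMdec2⟩ := decomp hM₂lor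
  have hM₂G : M₂ ∈ G := by
    rw [hMdec2]
    exact hcomp _ (hTrivG _ hU1.isTrivial) _ (hcomp _ (key μ hμ0) _ (hTrivG _ hU2.isTrivial))
  have hτ₂G : τ₂ ∈ G := by
    apply hTrivG
    rw [show τ₂ = fun p => p + b₂ from funext hb₂]
    exact isTrivial_translation b₂
  have hD₂G : D₂ ∈ G := by
    rw [show D₂ = fun p => a₂ • p from funext hD₂]
    exact hScalG a₂ ha₂
  rw [hg', hP₂]
  exact hcomp _ hD₂G _ (hcomp _ hτ₂G _ hM₂G)
end

section
/- (Scal∘Triv) ∩ Poi↑ = Triv↑: an orthochronous Poincaré transformation is a scaling composed with a trivial transformation if and only if it is itself an orthochronous trivial transformation. -/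
namespace Hlp

def dotE (p q : Pt) : ℝ := p 0 * q 0 + p 1 * q 1 + p 2 * q 2 + p 3 * q 3

lemma sqEucl_add (p q : Pt) : sqEucl (p + q) = sqEucl p + sqEucl q + 2 * dotE p q := by
  simp only [sqEucl, dotE, Pi.add_apply]; ring

lemma dot_preserved {L : Pt → Pt} (hlin : IsLinearMap ℝ L)
    (hE : ∀ p, sqEucl (L p) = sqEucl p) (p q : Pt) :
    dotE (L p) (L q) = dotE p q := by
  have h := hE (p + q)
  rw [hlin.map_add, sqEucl_add, sqEucl_add, hE p, hE q] at h
  linarith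

lemma ut0 : unitTime 0 = 1 := if_pos rfl
lemma ut1 : unitTime 1 = 0 := if_neg (by decide : (1 : Fin 4) ≠ 0)
lemma ut2 : unitTime 2 = 0 := if_neg (by decide : (2 : Fin 4) ≠ 0)
lemma ut3 : unitTime 3 = 0 := if_neg (by decide : (3 : Fin 4) ≠ 0)

lemma smul_app (a : ℝ) (p : Pt) (i : Fin 4) : (a • p) i = a * p i := rfl
lemma add_app (p q : Pt) (i : Fin 4) : (p + q) i = p i + q i := rfl
lemma sub_app (p q : Pt) (i : Fin 4) : (p - q) i = p i - q i := rfl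

lemma vert_struct {T τ L : Pt → Pt} {b : Pt}
    (hv : ∀ ℓ, IsVerticalLine ℓ → IsVerticalLine (T '' ℓ))
    (hb : ∀ p, τ p = p + b) (hlin : IsLinearMap ℝ L) (hTeq : T = τ ∘ L) :
    L unitTime 1 = 0 ∧ L unitTime 2 = 0 ∧ L unitTime 3 = 0 := by
  have h0 : IsVerticalLine {p : Pt | p 1 = 0 ∧ p 2 = 0 ∧ p 3 = 0} :=
    ⟨0, by simp⟩
  obtain ⟨q, hq⟩ := hv _ h0
  have hmem : ∀ x : Pt, x 1 = 0 → x 2 = 0 → x 3 = 0 →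
      (L x + b) 1 = q 1 ∧ (L x + b) 2 = q 2 ∧ (L x + b) 3 = q 3 := by
    intro x h1 h2 h3
    have hmm : T x ∈ T '' {p : Pt | p 1 = 0 ∧ p 2 = 0 ∧ p 3 = 0} :=
      Set.mem_image_of_mem T ⟨h1, h2, h3⟩
    rw [hq] at hmm
    have hTx : T x = L x + b := by rw [hTeq]; exact hb (L x)
    rwa [hTx] at hmm
  have hz := hmem 0 rfl rfl rfl
  rw [hlin.map_zero, zero_add] at hz
  have hu := hmem unitTime ut1 ut2 ut3
  refine ⟨?_, ?_, ?_⟩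
  · have h := hu.1; rw [add_app, hz.1] at h; linarith
  · have h := hu.2.1; rw [add_app, hz.2.1] at h; linarith
  · have h := hu.2.2; rw [add_app, hz.2.2] at h; linarith

lemma Lu0_sq {L : Pt → Pt} (hE : ∀ p, sqEucl (L p) = sqEucl p)
    (h1 : L unitTime 1 = 0) (h2 : L unitTime 2 = 0) (h3 : L unitTime 3 = 0) :
    (L unitTime 0) ^ 2 = 1 := by
  have h := hE unitTime
  rw [sqEucl, sqEucl, h1, h2, h3, ut0, ut1, ut2, ut3] at h
  linarith

lemma mink_pres {L : Pt → Pt} (hlin : IsLinearMap ℝ L)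
    (hE : ∀ p, sqEucl (L p) = sqEucl p)
    (h1 : L unitTime 1 = 0) (h2 : L unitTime 2 = 0) (h3 : L unitTime 3 = 0) :
    ∀ p, sqMink (L p) = sqMink p := by
  intro p
  have hu0sq := Lu0_sq hE h1 h2 h3
  set ps : Pt := p - p 0 • unitTime with hps
  have hps0 : ps 0 = 0 := by rw [hps, sub_app, smul_app, ut0]; ring
  have hps1 : ps 1 = p 1 := by rw [hps, sub_app, smul_app, ut1]; ring
  have hps2 : ps 2 = p 2 := by rw [hps, sub_app, smul_app, ut2]; ring
  have hps3 : ps 3 = p 3 := by rw [hps, sub_app, smul_app, ut3]; ring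
  have hdec : p = p 0 • unitTime + ps := by rw [hps]; abel
  have hLdec : L p = p 0 • L unitTime + L ps := by
    conv_lhs => rw [hdec]
    rw [hlin.map_add, hlin.map_smul]
  have hLps0 : L ps 0 = 0 := by
    have hdot := dot_preserved hlin hE ps unitTime
    rw [dotE, dotE, ut0, ut1, ut2, ut3, h1, h2, h3, hps0] at hdot
    have hne : L unitTime 0 ≠ 0 := by
      intro h; rw [h] at hu0sq; norm_num at hu0sq
    have hz : L ps 0 * L unitTime 0 = 0 := by linarith
    exact (mul_eq_zero.mp hz).resolve_right hne
  have c0 : L p 0 = p 0 * L unitTime 0 := by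
    rw [hLdec, add_app, smul_app, hLps0]; ring
  have c1 : L p 1 = L ps 1 := by rw [hLdec, add_app, smul_app, h1]; ring
  have c2 : L p 2 = L ps 2 := by rw [hLdec, add_app, smul_app, h2]; ring
  have c3 : L p 3 = L ps 3 := by rw [hLdec, add_app, smul_app, h3]; ring
  have hEps := hE ps
  rw [sqEucl, sqEucl, hLps0, hps0, hps1, hps2, hps3] at hEps
  rw [sqMink, sqMink, c0, c1, c2, c3]
  nlinarith [hEps, hu0sq]

lemma scal_image_vert {a : ℝ} (ha : a ≠ 0) {s : Set Pt} (hs : IsVerticalLine s) :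
    IsVerticalLine ((fun p : Pt => a • p) '' s) := by
  obtain ⟨q, rfl⟩ := hs
  refine ⟨a • q, ?_⟩
  ext p
  simp only [Set.mem_image, Set.mem_setOf_eq, smul_app]
  constructor
  · rintro ⟨x, ⟨hx1, hx2, hx3⟩, rfl⟩
    exact ⟨by rw [smul_app, hx1], by rw [smul_app, hx2], by rw [smul_app, hx3]⟩
  · rintro ⟨hp1, hp2, hp3⟩
    refine ⟨a⁻¹ • p, ⟨?_, ?_, ?_⟩, ?_⟩
    · rw [smul_app, hp1, ← mul_assoc, inv_mul_cancel₀ ha, one_mul]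
    · rw [smul_app, hp2, ← mul_assoc, inv_mul_cancel₀ ha, one_mul]
    · rw [smul_app, hp3, ← mul_assoc, inv_mul_cancel₀ ha, one_mul]
    · rw [smul_smul, mul_inv_cancel₀ ha, one_smul]

end Hlp

/-- (Scal∘Triv) ∩ Poi↑ = Triv↑. -/
theorem scalTriv_inter_poiUp_eq_trivUp : setComp Scal Triv ∩ PoiUp = TrivUp := by
  ext f
  constructor
  · rintro ⟨⟨D, ⟨a, ha, hD⟩, T, hT, hfeq⟩, hPoi, hOrtho⟩
    obtain ⟨⟨τ, L, ⟨b, hb⟩, hlin, hbij, hE, hTeq⟩, hv⟩ := hT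
    obtain ⟨h1, h2, h3⟩ := Hlp.vert_struct hv hb hlin hTeq
    have hu0sq := Hlp.Lu0_sq hE h1 h2 h3
    have hf : ∀ p, f p = a • L p + a • b := by
      intro p
      rw [hfeq]
      simp only [Function.comp_apply]
      rw [hD, hTeq]
      simp only [Function.comp_apply]
      rw [hb, smul_add]
    obtain ⟨τ', L', ⟨b', hb'⟩, ⟨hlin', hbij', hM'⟩, hPeq⟩ := hPoi
    have hf' : ∀ p, f p = L' p + b' := by
      intro p; rw [hPeq]; simp only [Function.comp_apply]; rw [hb']
    have hb'eq : b' = a • b := by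
      have e0 : f 0 = a • b := by rw [hf 0, hlin.map_zero, smul_zero, zero_add]
      have e0' : f 0 = L' 0 + b' := hf' 0
      rw [hlin'.map_zero, zero_add] at e0'
      rw [← e0', e0]
    have hL' : ∀ p, L' p = a • L p := by
      intro p
      have h := (hf p).symm.trans (hf' p)
      rw [hb'eq] at h
      exact (add_right_cancel h).symm
    have ha2 : a ^ 2 = 1 := by
      have hm := hM' unitTime
      rw [hL' unitTime, sqMink, sqMink, Hlp.smul_app, Hlp.smul_app, Hlp.smul_app,
        Hlp.smul_app, h1, h2, h3, Hlp.ut0, Hlp.ut1, Hlp.ut2, Hlp.ut3] at hm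
      nlinarith [hm, hu0sq]
    have hsb : Function.Bijective (fun p : Pt => a • p) :=
      Function.bijective_iff_has_inverse.mpr
        ⟨fun p => a⁻¹ • p,
          fun p => by simp only [smul_smul, inv_mul_cancel₀ ha, one_smul],
          fun p => by simp only [smul_smul, mul_inv_cancel₀ ha, one_smul]⟩
    refine ⟨⟨⟨fun p => p + a • b, fun p => a • L p, ⟨a • b, fun p => rfl⟩,
      ?_, ?_, ?_, ?_⟩, ?_⟩, hOrtho⟩
    · constructor
      · intro p q; rw [hlin.map_add, smul_add]
      · intro c p; rw [hlin.map_smul]; exact smul_comm a c (L p)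
    · exact hsb.comp hbij
    · intro p
      have hsq : sqEucl (a • L p) = a ^ 2 * sqEucl (L p) := by
        simp only [sqEucl, Hlp.smul_app]; ring
      rw [hsq, hE, ha2, one_mul]
    · funext p; exact hf p
    · intro ℓ hℓ
      have hDfun : D = fun p : Pt => a • p := funext hD
      rw [hfeq, hDfun, Set.image_comp]
      exact Hlp.scal_image_vert ha (hv ℓ hℓ)
  · rintro ⟨hTriv, hOrtho⟩
    obtain ⟨⟨τ, L, ⟨b, hb⟩, hlin, hbij, hE, hTeq⟩, hv⟩ := hTriv
    obtain ⟨h1, h2, h3⟩ := Hlp.vert_struct hv hb hlin hTeq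
    refine ⟨⟨fun p => (1 : ℝ) • p, ⟨1, one_ne_zero, fun p => rfl⟩, f,
      ⟨⟨τ, L, ⟨b, hb⟩, hlin, hbij, hE, hTeq⟩, hv⟩, ?_⟩, ?_, hOrtho⟩
    · funext p; rw [Function.comp_apply, one_smul]
    · exact ⟨τ, L, ⟨b, hb⟩, ⟨hlin, hbij, Hlp.mink_pres hlin hE h1 h2 h3⟩, hTeq⟩
end

section
/- Scal∘Poi = Scal∘Poi↑: every composition of a scaling with a Poincaré transformation can be written as a composition of a scaling with an orthochronous Poincaré transformation, and conversely. -/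
lemma neg_poincare {P : Pt → Pt} (h : IsPoincare P) : IsPoincare (fun p => -(P p)) := by
  obtain ⟨τ, L, ⟨b, hτ⟩, ⟨hlin, hbij, hmink⟩, hP⟩ := h
  refine ⟨fun q => q + (-b), fun p => -(L p), ⟨-b, fun p => rfl⟩, ⟨⟨?_, ?_⟩, ?_, ?_⟩, ?_⟩
  · intro x y; rw [hlin.map_add, neg_add]
  · intro c x; rw [hlin.map_smul, smul_neg]
  · exact neg_involutive.bijective.comp hbij
  · intro p
    have : sqMink (-(L p)) = sqMink (L p) := by simp [sqMink]
    rw [this, hmink]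
  · funext p
    have : P p = L p + b := by rw [hP]; simp [hτ]
    show -(P p) = -L p + -b
    rw [this, neg_add]

lemma poincare_time_ne {P : Pt → Pt} (h : IsPoincare P) : P unitTime 0 ≠ P 0 0 := by
  obtain ⟨τ, L, ⟨b, hτ⟩, ⟨hlin, hbij, hmink⟩, hP⟩ := h
  have hL0 : L 0 = 0 := (hlin.mk' L).map_zero
  have h1 : P unitTime 0 = L unitTime 0 + b 0 := by rw [hP]; simp [hτ]
  have h2 : P 0 0 = b 0 := by rw [hP]; simp [hτ, hL0]
  rw [h1, h2]
  have hm := hmink unitTime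
  have hu : sqMink unitTime = 1 := by simp [sqMink, unitTime]
  rw [hu] at hm
  have : (L unitTime 0) ^ 2 - (L unitTime 1) ^ 2 - (L unitTime 2) ^ 2
      - (L unitTime 3) ^ 2 = 1 := hm
  intro hc
  have : L unitTime 0 = 0 := by linarith
  nlinarith [sq_nonneg (L unitTime 1), sq_nonneg (L unitTime 2), sq_nonneg (L unitTime 3)]

/-- Scal∘Poi = Scal∘Poi↑. -/
theorem scalPoi_eq_scalPoiUp : setComp Scal Poi = setComp Scal PoiUp := by
  ext f
  constructor
  · rintro ⟨D, ⟨a, ha, hD⟩, P, hP, rfl⟩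
    by_cases hor : Orthochronous P
    · exact ⟨D, ⟨a, ha, hD⟩, P, ⟨hP, hor⟩, rfl⟩
    · refine ⟨fun p => (-a) • p, ⟨-a, neg_ne_zero.mpr ha, fun p => rfl⟩,
        fun p => -(P p), ⟨neg_poincare hP, ?_⟩, ?_⟩
      · have hne := poincare_time_ne hP
        have hlt : P unitTime 0 < P 0 0 := lt_of_le_of_ne (not_lt.mp hor) hne
        show (-(P unitTime)) 0 > (-(P 0)) 0
        simp only [Pi.neg_apply]
        linarith
      · funext p
        simp [hD, neg_smul_neg]
  · rintro ⟨D, hD, P, ⟨hP, _⟩, rfl⟩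
    exact ⟨D, hD, P, hP, rfl⟩
end

section
/- Galilean spacetime extended with lightlike relatedness is definitionally equivalent to late classical spacetime: ⟨GalST, λ⟩ = ⟨ℝ⁴, ≡_S, ≡_T, Col, λ⟩ and LClassST = ⟨ℝ⁴, S, λ⟩ have exactly the same concepts. -/
open FirstOrder Language Function Set

/-- The language of relativistic spacetime: one binary relation symbol. -/
def relLang : Language :=
  { Functions := fun _ => Empty, Relations := fun m => PLift (m = 2) }

/-- Relativistic spacetime RelST = ⟨ℝ⁴, λ⟩. -/
def relStr : relLang.Structure Pt where
  funMap := fun f => f.elim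
  RelMap := fun r v =>
    lightlike (v (Fin.cast r.down.symm 0)) (v (Fin.cast r.down.symm 1))

/-- The language of late classical spacetime: two binary relation symbols. -/
def classLang : Language :=
  { Functions := fun _ => Empty, Relations := fun m => PLift (m = 2) ⊕ PLift (m = 2) }

/-- Late classical spacetime LClassST = ⟨ℝ⁴, S, λ⟩. -/
def classStr : classLang.Structure Pt where
  funMap := fun f => f.elim
  RelMap := fun r v =>
    match r with
    | .inl ⟨h⟩ => simul (v (Fin.cast h.symm 0)) (v (Fin.cast h.symm 1))
    | .inr ⟨h⟩ => lightlike (v (Fin.cast h.symm 0)) (v (Fin.cast h.symm 1))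

/-- `ConOf L str R` : the `n`-ary relation `R` on ℝ⁴ is a concept of the structure
`⟨ℝ⁴; str⟩`, i.e. first-order definable without parameters. -/
def ConOf (L : Language) (str : L.Structure Pt) {n : ℕ} (R : Set (Fin n → Pt)) : Prop :=
  letI := str
  (∅ : Set Pt).Definable L R

/-- Euclidean congruence: (p,q) ≡_E (r,s). -/
def euclCng (p q r s : Pt) : Prop := sqEucl (p - q) = sqEucl (r - s)

/-- Spatial congruence: (p,q) ≡_S (r,s). -/
def spatialCng (p q r s : Pt) : Prop := simul p q ∧ simul r s ∧ euclCng p q r s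

/-- Temporal congruence: (p,q) ≡_T (r,s). -/
def temporalCng (p q r s : Pt) : Prop := p 0 - q 0 = r 0 - s 0

/-- The ternary collinearity relation on ℝ⁴. -/
def Col (p q r : Pt) : Prop := (∃ a : ℝ, q = p + a • (r - p)) ∨ r = p

/-- The language of Galilean spacetime extended with lightlike relatedness,
⟨GalST, λ⟩ = ⟨ℝ⁴, ≡_S, ≡_T, Col, λ⟩: two 4-ary relation symbols, one ternary
and one binary. -/
def galLang : Language :=
  { Functions := fun _ => Empty,
    Relations := fun m => (PLift (m = 4) ⊕ PLift (m = 4)) ⊕ (PLift (m = 3) ⊕ PLift (m = 2)) }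

/-- Galilean spacetime extended with lightlike relatedness,
⟨GalST, λ⟩ = ⟨ℝ⁴, ≡_S, ≡_T, Col, λ⟩. -/
def galStr : galLang.Structure Pt where
  funMap := fun f => f.elim
  RelMap := fun r v =>
    match r with
    | .inl (.inl ⟨h⟩) =>
        spatialCng (v (Fin.cast h.symm 0)) (v (Fin.cast h.symm 1))
          (v (Fin.cast h.symm 2)) (v (Fin.cast h.symm 3))
    | .inl (.inr ⟨h⟩) =>
        temporalCng (v (Fin.cast h.symm 0)) (v (Fin.cast h.symm 1))
          (v (Fin.cast h.symm 2)) (v (Fin.cast h.symm 3))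
    | .inr (.inl ⟨h⟩) =>
        Col (v (Fin.cast h.symm 0)) (v (Fin.cast h.symm 1)) (v (Fin.cast h.symm 2))
    | .inr (.inr ⟨h⟩) =>
        lightlike (v (Fin.cast h.symm 0)) (v (Fin.cast h.symm 1))

/-! ### Generic machinery: transferring concepts between structures -/

section Machinery
variable {L : Language}

/-- Every term of a language without function symbols is a variable. -/
def termVar (hf : ∀ n, L.Functions n → Empty) : ∀ {β : Type*}, L.Term β → β
  | _, .var v => v
  | _, .func f _ => (hf _ f).elim

lemma realize_termVar {M : Type*} [L.Structure M] (hf : ∀ n, L.Functions n → Empty) {β : Type*}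
    (t : L.Term β) (v : β → M) : t.realize v = v (termVar hf t) := by
  cases t with
  | var => rfl
  | func f ts => exact (hf _ f).elim

end Machinery

theorem concept_transfer {L₁ L₂ : Language} (str₁ : L₁.Structure Pt) (str₂ : L₂.Structure Pt)
    (hf : ∀ n, L₁.Functions n → Empty)
    (hrel : ∀ (m : ℕ) (R : L₁.Relations m), ConOf L₂ str₂ {v : Fin m → Pt | str₁.RelMap R v})
    {n : ℕ} (R : Set (Fin n → Pt)) (h : ConOf L₁ str₁ R) : ConOf L₂ str₂ R := by
  letI := str₁; letI := str₂
  have key : ∀ {l : ℕ} (φ : L₁.BoundedFormula (Fin n) l), ∃ ψ : L₂.BoundedFormula (Fin n) l,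
      ∀ (v : Fin n → Pt) (xs : Fin l → Pt), ψ.Realize v xs ↔ φ.Realize v xs := by
    intro l φ
    induction φ with
    | falsum => exact ⟨⊥, fun _ _ => Iff.rfl⟩
    | equal t₁ t₂ =>
        refine ⟨(Term.var (termVar hf t₁)).bdEqual (Term.var (termVar hf t₂)), fun v xs => ?_⟩
        simp only [BoundedFormula.realize_bdEqual, Term.realize_var]
        show _ ↔ t₁.realize (Sum.elim v xs) = t₂.realize (Sum.elim v xs)
        rw [realize_termVar hf, realize_termVar hf]
    | @rel l m R ts =>
        obtain ⟨ψ₀, hψ₀⟩ := Set.empty_definable_iff.1 (hrel m R)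
        refine ⟨(BoundedFormula.relabel (fun i => termVar hf (ts i)) ψ₀ :
          L₂.BoundedFormula (Fin n) (l + 0)), fun v xs => ?_⟩
        have h1 := @BoundedFormula.realize_relabel L₂ Pt _ (Fin m) (Fin n) l 0 ψ₀
          (fun i => termVar hf (ts i)) v xs
        have h2 : ∀ (w : Fin m → Pt) (d : Fin 0 → Pt), BoundedFormula.Realize ψ₀ w d ↔
            Structure.RelMap R w := by
          intro w d
          have h4 := Set.ext_iff.1 hψ₀ w
          simp only [mem_setOf_eq, Formula.Realize] at h4
          exact (iff_of_eq (congrArg (BoundedFormula.Realize ψ₀ w) (Subsingleton.elim d _))).trans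
            h4.symm
        refine h1.trans ((h2 _ _).trans ?_)
        show Structure.RelMap R _ ↔ Structure.RelMap R (fun i => (ts i).realize (Sum.elim v xs))
        have h3 : (Sum.elim v (xs ∘ Fin.castAdd 0) ∘ fun i => termVar hf (ts i))
            = fun i => (ts i).realize (Sum.elim v xs) := by
          funext i
          rw [realize_termVar hf]
          simp only [Function.comp_apply]
          cases termVar hf (ts i) with
          | inl a => rfl
          | inr b => rfl
        rw [h3]
    | imp f g ih1 ih2 =>
        obtain ⟨ψ₁, h1⟩ := ih1; obtain ⟨ψ₂, h2⟩ := ih2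
        exact ⟨ψ₁.imp ψ₂, fun v xs => by simp [h1, h2]⟩
    | all f ih =>
        obtain ⟨ψ, h1⟩ := ih
        exact ⟨ψ.all, fun v xs => by simp [h1]⟩
  obtain ⟨φ, rfl⟩ := Set.empty_definable_iff.1 h
  obtain ⟨ψ, hψ⟩ := key φ
  refine Set.empty_definable_iff.2 ⟨ψ, ?_⟩
  ext v
  simp only [mem_setOf_eq, Formula.Realize]
  exact (hψ v _).symm

/-! ### Auxiliary geometric predicates -/

/-- Same spatial location. -/
def SS (p q : Pt) : Prop := p 1 = q 1 ∧ p 2 = q 2 ∧ p 3 = q 3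

/-- `m` is a temporal midpoint of `x` and `y`. -/
def TMid (x m y : Pt) : Prop := x 0 + y 0 = 2 * m 0

/-- squared spatial distance -/
def sd2 (p q : Pt) : ℝ := (p 1 - q 1) ^ 2 + (p 2 - q 2) ^ 2 + (p 3 - q 3) ^ 2

/-- spatial projections are collinear (with ratio from `p`):
`q - p` is spatially proportional to `r - p`. -/
def SColP (p q r : Pt) : Prop :=
  ∃ β : ℝ, q 1 - p 1 = β * (r 1 - p 1) ∧ q 2 - p 2 = β * (r 2 - p 2) ∧
    q 3 - p 3 = β * (r 3 - p 3)

/-- the cross-product condition linking temporal and spatial ratios. -/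
def XP (p q r : Pt) : Prop := (q 0 - p 0) ^ 2 * sd2 r p = (r 0 - p 0) ^ 2 * sd2 q p

/-! ### The mathematical content: characterizations of the auxiliary predicates -/

/-! ### helper lemmas -/

@[simp] lemma mk4_0 (t x y z : ℝ) : (![t,x,y,z] : Pt) 0 = t := rfl
@[simp] lemma mk4_1 (t x y z : ℝ) : (![t,x,y,z] : Pt) 1 = x := rfl
@[simp] lemma mk4_2 (t x y z : ℝ) : (![t,x,y,z] : Pt) 2 = y := rfl
@[simp] lemma mk4_3 (t x y z : ℝ) : (![t,x,y,z] : Pt) 3 = z := rfl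

lemma pt_ext {p q : Pt} (h0 : p 0 = q 0) (h1 : p 1 = q 1) (h2 : p 2 = q 2) (h3 : p 3 = q 3) :
    p = q := by
  funext i
  fin_cases i <;> assumption

lemma sq3_zero {x y z : ℝ} (h : x ^ 2 + y ^ 2 + z ^ 2 = 0) : x = 0 ∧ y = 0 ∧ z = 0 := by
  refine ⟨?_, ?_, ?_⟩ <;> nlinarith [sq_nonneg x, sq_nonneg y, sq_nonneg z]

lemma midsolve {a b c : ℝ} (hne : b ≠ c) (h : (a - b) ^ 2 = (a - c) ^ 2) : 2 * a = b + c := by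
  have h5 : (c - b) * (2 * a - (b + c)) = 0 := by nlinarith [h]
  rcases mul_eq_zero.1 h5 with h6 | h6
  · exact absurd (by linarith) hne
  · linarith

lemma scng_iff_sd2 (p q r s : Pt) :
    spatialCng p q r s ↔ (simul p q ∧ simul r s ∧ sd2 p q = sd2 r s) := by
  unfold spatialCng euclCng sqEucl sd2 simul
  simp only [Pi.sub_apply]
  constructor <;> rintro ⟨h1, h2, h3⟩ <;> refine ⟨h1, h2, ?_⟩ <;> nlinarith [h3, h1, h2]

lemma sd2_comm (x y : Pt) : sd2 x y = sd2 y x := by simp only [sd2]; ring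

section vec9
variable (v0 v1 v2 v3 v4 v5 v6 v7 v8 : Pt)

lemma add_smul_apply (p r : Pt) (a : ℝ) (i : Fin 4) :
    (p + a • (r - p)) i = p i + a * (r i - p i) := by
  simp [Pi.add_apply, Pi.smul_apply, Pi.sub_apply]

section vec9
variable (v0 v1 v2 v3 v4 v5 v6 v7 v8 : Pt)
@[simp] lemma vec9_0 : (![v0,v1,v2,v3,v4,v5,v6,v7,v8]) 0 = v0 := rfl
@[simp] lemma vec9_1 : (![v0,v1,v2,v3,v4,v5,v6,v7,v8]) 1 = v1 := rfl
@[simp] lemma vec9_2 : (![v0,v1,v2,v3,v4,v5,v6,v7,v8]) 2 = v2 := rfl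
@[simp] lemma vec9_3 : (![v0,v1,v2,v3,v4,v5,v6,v7,v8]) 3 = v3 := rfl
@[simp] lemma vec9_4 : (![v0,v1,v2,v3,v4,v5,v6,v7,v8]) 4 = v4 := rfl
@[simp] lemma vec9_5 : (![v0,v1,v2,v3,v4,v5,v6,v7,v8]) 5 = v5 := rfl
@[simp] lemma vec9_6 : (![v0,v1,v2,v3,v4,v5,v6,v7,v8]) 6 = v6 := rfl
@[simp] lemma vec9_7 : (![v0,v1,v2,v3,v4,v5,v6,v7,v8]) 7 = v7 := rfl
@[simp] lemma vec9_8 : (![v0,v1,v2,v3,v4,v5,v6,v7,v8]) 8 = v8 := rfl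
end vec9


lemma ss_iff (p q : Pt) :
    (p = q ∨ (¬ simul p q ∧ ∀ w : Fin 2 → Pt,
      (lightlike (w 0) p ∧ lightlike (w 0) q) ∧ (lightlike (w 1) p ∧ lightlike (w 1) q) →
        simul (w 0) (w 1))) ↔ SS p q := by
  constructor
  · rintro (rfl | ⟨hns, hall⟩)
    · exact ⟨rfl, rfl, rfl⟩
    · simp only [simul] at hns
      by_cases hD : (q 1 - p 1) ^ 2 + (q 2 - p 2) ^ 2 + (q 3 - p 3) ^ 2 = 0
      · obtain ⟨e1, e2, e3⟩ := sq3_zero hD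
        exact ⟨by linarith, by linarith, by linarith⟩
      · exfalso
        set Δ : ℝ := q 0 - p 0 with hΔ
        set D : ℝ := (q 1 - p 1) ^ 2 + (q 2 - p 2) ^ 2 + (q 3 - p 3) ^ 2 with hDdef
        have hDnn : 0 ≤ D := by positivity
        set d : ℝ := Real.sqrt D with hddef
        have hd : 0 < d := Real.sqrt_pos.2 (lt_of_le_of_ne hDnn (Ne.symm hD))
        have hd2 : d ^ 2 = D := Real.sq_sqrt hDnn
        obtain ⟨β, hβ⟩ : ∃ β : ℝ, 2 * d * β = d + Δ :=
          ⟨(d + Δ) / (2 * d), by field_simp⟩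
        obtain ⟨β', hβ'⟩ : ∃ β' : ℝ, 2 * d * β' = d - Δ :=
          ⟨(d - Δ) / (2 * d), by field_simp⟩
        set u : Pt := ![p 0 + β * d, p 1 + β * (q 1 - p 1), p 2 + β * (q 2 - p 2),
          p 3 + β * (q 3 - p 3)] with hu
        set u' : Pt := ![p 0 - β' * d, p 1 + β' * (q 1 - p 1), p 2 + β' * (q 2 - p 2),
          p 3 + β' * (q 3 - p 3)] with hu'
        have key := hall ![u, u'] ⟨⟨?_, ?_⟩, ?_, ?_⟩
        · simp only [simul, Matrix.cons_val_zero, Matrix.cons_val_one, Matrix.head_cons,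
            hu, hu', mk4_0] at key
          nlinarith [key, hβ, hβ', hd]
        · show lightlike u p
          simp only [lightlike, hu, mk4_0, mk4_1, mk4_2, mk4_3]
          linear_combination (β ^ 2) * hd2
        · show lightlike u q
          simp only [lightlike, hu, mk4_0, mk4_1, mk4_2, mk4_3]
          linear_combination ((β - 1) ^ 2) * hd2 + (d - Δ) * hβ
        · show lightlike u' p
          simp only [lightlike, hu', mk4_0, mk4_1, mk4_2, mk4_3]
          linear_combination (β' ^ 2) * hd2
        · show lightlike u' q
          simp only [lightlike, hu', mk4_0, mk4_1, mk4_2, mk4_3]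
          linear_combination ((β' - 1) ^ 2) * hd2 + (d + Δ) * hβ'
  · intro hss
    obtain ⟨e1, e2, e3⟩ := hss
    by_cases hpq : p = q
    · exact Or.inl hpq
    · right
      have hne : p 0 ≠ q 0 := fun hc => hpq (pt_ext hc e1 e2 e3)
      refine ⟨hne, fun w ⟨⟨l1, l2⟩, l3, l4⟩ => ?_⟩
      simp only [lightlike] at l1 l2 l3 l4
      rw [e1, e2, e3] at l1 l3
      have h5 := midsolve hne (l1.trans l2.symm)
      have h6 := midsolve hne (l3.trans l4.symm)
      simp only [simul]
      linarith

lemma tmid_iff (x m y : Pt) :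
    (∃ w : Fin 3 → Pt,
      SS (w 0) m ∧ simul (w 0) x ∧ SS (w 1) m ∧ simul (w 1) y ∧ simul (w 2) m ∧
        lightlike (w 2) (w 0) ∧ lightlike (w 2) (w 1) ∧ (simul (w 0) (w 1) → simul (w 0) m)) ↔
      TMid x m y := by
  constructor
  · rintro ⟨w, ⟨s1, s2, s3⟩, hx, ⟨t1, t2, t3⟩, hy, hu, l1, l2, himp⟩
    simp only [simul] at hx hy hu
    simp only [lightlike] at l1 l2
    simp only [TMid]
    have e1 : (w 2 0 - w 0 0) ^ 2 = (w 2 0 - w 1 0) ^ 2 := by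
      rw [l1, l2, s1, s2, s3, t1, t2, t3]
    by_cases hxy : x 0 = y 0
    · have h8 := himp (show simul (w 0) (w 1) by simp only [simul]; rw [hx, hy, hxy])
      simp only [simul] at h8
      linarith
    · have h9 := midsolve (show w 0 0 ≠ w 1 0 from
        fun hc => hxy (by rw [← hx, ← hy, hc])) e1
      linarith
  · intro h
    simp only [TMid] at h
    refine ⟨![![x 0, m 1, m 2, m 3], ![y 0, m 1, m 2, m 3],
      ![m 0, m 1 + (x 0 - m 0), m 2, m 3] ], ⟨rfl, rfl, rfl⟩, rfl, ⟨rfl, rfl, rfl⟩, rfl, rfl,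
      ?_, ?_, ?_⟩
    · show lightlike ![m 0, m 1 + (x 0 - m 0), m 2, m 3] ![x 0, m 1, m 2, m 3]
      simp only [lightlike, mk4_0, mk4_1, mk4_2, mk4_3]; ring
    · show lightlike ![m 0, m 1 + (x 0 - m 0), m 2, m 3] ![y 0, m 1, m 2, m 3]
      simp only [lightlike, mk4_0, mk4_1, mk4_2, mk4_3]
      have h6 : m 0 - y 0 = x 0 - m 0 := by linarith
      rw [h6]; ring
    · intro h2
      simp only [simul, Matrix.cons_val_zero, Matrix.cons_val_one, Matrix.head_cons, mk4_0]
        at h2 ⊢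
      linarith

lemma tcng_iff (p q r s : Pt) :
    (∃ w : Fin 1 → Pt, TMid p (w 0) s ∧ TMid q (w 0) r) ↔ temporalCng p q r s := by
  constructor
  · rintro ⟨w, h1, h2⟩
    simp only [TMid] at *; simp only [temporalCng]; linarith
  · intro h
    simp only [temporalCng] at h
    refine ⟨fun _ => ![(p 0 + s 0) / 2, 0, 0, 0], ?_, ?_⟩ <;> simp only [TMid, mk4_0] <;> linarith

lemma scng_iff (p q r s : Pt) :
    (simul p q ∧ simul r s ∧ ∃ w : Fin 3 → Pt,
      SS (w 0) p ∧ lightlike (w 0) q ∧ SS (w 1) r ∧ lightlike (w 1) s ∧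
        ((TMid (w 0) (w 2) (w 1) ∧ TMid p (w 2) r) ∨ (TMid (w 0) (w 2) r ∧ TMid p (w 2) (w 1)))) ↔
      spatialCng p q r s := by
  rw [scng_iff_sd2]
  constructor
  · rintro ⟨h1, h2, w, ⟨a1, a2, a3⟩, hl1, ⟨b1, b2, b3⟩, hl2, hd⟩
    refine ⟨h1, h2, ?_⟩
    simp only [simul] at h1 h2
    simp only [lightlike] at hl1 hl2
    simp only [sd2]
    have e1 : (w 0 0 - p 0) ^ 2 = (p 1 - q 1) ^ 2 + (p 2 - q 2) ^ 2 + (p 3 - q 3) ^ 2 := by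
      rw [← h1] at hl1; rw [hl1, a1, a2, a3]
    have e2 : (w 1 0 - r 0) ^ 2 = (r 1 - s 1) ^ 2 + (r 2 - s 2) ^ 2 + (r 3 - s 3) ^ 2 := by
      rw [← h2] at hl2; rw [hl2, b1, b2, b3]
    simp only [TMid] at hd
    rcases hd with ⟨n1, n2⟩ | ⟨n1, n2⟩
    · have h6 : w 0 0 - p 0 = -(w 1 0 - r 0) := by linarith
      rw [h6] at e1
      rw [← e1, ← e2]; ring
    · have h6 : w 0 0 - p 0 = w 1 0 - r 0 := by linarith
      rw [h6] at e1
      rw [← e1, ← e2]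
  · rintro ⟨h1, h2, h3⟩
    have hnn : 0 ≤ sd2 p q := by simp only [sd2]; positivity
    have hs1 : Real.sqrt (sd2 p q) ^ 2 = sd2 p q := Real.sq_sqrt hnn
    simp only [simul] at h1 h2
    refine ⟨by exact h1, by exact h2, ![![p 0 + Real.sqrt (sd2 p q), p 1, p 2, p 3],
      ![r 0 + Real.sqrt (sd2 p q), r 1, r 2, r 3],
      ![(p 0 + r 0 + Real.sqrt (sd2 p q)) / 2, 0, 0, 0] ], ⟨rfl, rfl, rfl⟩, ?_,
      ⟨rfl, rfl, rfl⟩, ?_, Or.inr ⟨?_, ?_⟩⟩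
    · show lightlike ![p 0 + Real.sqrt (sd2 p q), p 1, p 2, p 3] q
      simp only [lightlike, mk4_0, mk4_1, mk4_2, mk4_3]
      have hh : p 0 + Real.sqrt (sd2 p q) - q 0 = Real.sqrt (sd2 p q) := by rw [← h1]; ring
      rw [hh]
      simp only [sd2] at hs1 ⊢; linarith [hs1]
    · show lightlike ![r 0 + Real.sqrt (sd2 p q), r 1, r 2, r 3] s
      simp only [lightlike, mk4_0, mk4_1, mk4_2, mk4_3]
      have hh : r 0 + Real.sqrt (sd2 p q) - s 0 = Real.sqrt (sd2 p q) := by rw [← h2]; ring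
      rw [hh, h3]
      rw [h3] at hs1
      simp only [sd2] at hs1 ⊢
      linarith [hs1]
    · show TMid ![p 0 + Real.sqrt (sd2 p q), p 1, p 2, p 3]
        ![(p 0 + r 0 + Real.sqrt (sd2 p q)) / 2, 0, 0, 0] r
      simp only [TMid, mk4_0]; ring
    · show TMid p ![(p 0 + r 0 + Real.sqrt (sd2 p q)) / 2, 0, 0, 0]
        ![r 0 + Real.sqrt (sd2 p q), r 1, r 2, r 3]
      simp only [TMid, mk4_0]; ring

lemma scol3_iff (a b c : Pt) :
    (simul a b ∧ simul a c ∧ ∀ w : Fin 2 → Pt,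
      (spatialCng a (w 0) a (w 1) ∧ spatialCng b (w 0) b (w 1)) →
        spatialCng c (w 0) c (w 1)) ↔ (simul a b ∧ simul a c ∧ SColP a c b) := by
  simp only [simul] at *
  constructor
  · rintro ⟨h1, h2, hall⟩
    refine ⟨h1, h2, ?_⟩
    by_cases hb : (b 1 - a 1) ^ 2 + (b 2 - a 2) ^ 2 + (b 3 - a 3) ^ 2 = 0
    · obtain ⟨f1, f2, f3⟩ := sq3_zero hb
      -- b is spatially equal to a; show c is too
      have key := hall ![![a 0, c 1, c 2, c 3],
        ![a 0, 2 * a 1 - c 1, 2 * a 2 - c 2, 2 * a 3 - c 3] ] ⟨?_, ?_⟩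
      · rw [scng_iff_sd2] at key
        obtain ⟨-, -, h7⟩ := key
        simp only [sd2, Matrix.cons_val_zero, Matrix.cons_val_one, Matrix.head_cons,
          mk4_0, mk4_1, mk4_2, mk4_3] at h7
        have h8 : (c 1 - a 1) ^ 2 + (c 2 - a 2) ^ 2 + (c 3 - a 3) ^ 2 = 0 := by nlinarith [h7]
        obtain ⟨g1, g2, g3⟩ := sq3_zero h8
        exact ⟨0, by linarith, by linarith, by linarith⟩
      · rw [scng_iff_sd2]
        refine ⟨rfl, rfl, ?_⟩
        simp only [sd2, Matrix.cons_val_zero, Matrix.cons_val_one, Matrix.head_cons,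
          mk4_0, mk4_1, mk4_2, mk4_3]
        ring
      · rw [scng_iff_sd2]
        refine ⟨by simpa [simul] using h1.symm, by simpa [simul] using h1.symm, ?_⟩
        simp only [sd2, Matrix.cons_val_zero, Matrix.cons_val_one, Matrix.head_cons,
          mk4_0, mk4_1, mk4_2, mk4_3]
        have hb1 : b 1 = a 1 := by linarith
        have hb2 : b 2 = a 2 := by linarith
        have hb3 : b 3 = a 3 := by linarith
        rw [hb1, hb2, hb3]; ring
    · set N : ℝ := (b 1 - a 1) ^ 2 + (b 2 - a 2) ^ 2 + (b 3 - a 3) ^ 2 with hN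
      obtain ⟨μ, hμ⟩ : ∃ μ : ℝ, μ * N = (c 1 - a 1) * (b 1 - a 1) +
          (c 2 - a 2) * (b 2 - a 2) + (c 3 - a 3) * (b 3 - a 3) :=
        ⟨((c 1 - a 1) * (b 1 - a 1) + (c 2 - a 2) * (b 2 - a 2) +
          (c 3 - a 3) * (b 3 - a 3)) / N, by field_simp⟩
      obtain ⟨ν1, hν1⟩ : ∃ x : ℝ, x = c 1 - a 1 - μ * (b 1 - a 1) := ⟨_, rfl⟩
      obtain ⟨ν2, hν2⟩ : ∃ x : ℝ, x = c 2 - a 2 - μ * (b 2 - a 2) := ⟨_, rfl⟩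
      obtain ⟨ν3, hν3⟩ : ∃ x : ℝ, x = c 3 - a 3 - μ * (b 3 - a 3) := ⟨_, rfl⟩
      by_cases hν : ν1 = 0 ∧ ν2 = 0 ∧ ν3 = 0
      · obtain ⟨g1, g2, g3⟩ := hν
        rw [hν1] at g1; rw [hν2] at g2; rw [hν3] at g3
        exact ⟨μ, by linarith, by linarith, by linarith⟩
      · exfalso
        have key := hall ![![a 0, c 1, c 2, c 3],
          ![a 0, c 1 - 2 * ν1, c 2 - 2 * ν2, c 3 - 2 * ν3] ] ⟨?_, ?_⟩
        · rw [scng_iff_sd2] at key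
          obtain ⟨-, -, h7⟩ := key
          simp only [sd2, Matrix.cons_val_zero, Matrix.cons_val_one, Matrix.head_cons,
            mk4_0, mk4_1, mk4_2, mk4_3] at h7
          have h8 : ν1 ^ 2 + ν2 ^ 2 + ν3 ^ 2 = 0 := by nlinarith [h7]
          exact hν (sq3_zero h8)
        · rw [scng_iff_sd2]
          refine ⟨rfl, rfl, ?_⟩
          simp only [sd2, Matrix.cons_val_zero, Matrix.cons_val_one, Matrix.head_cons,
            mk4_0, mk4_1, mk4_2, mk4_3]
          rw [hν1, hν2, hν3]
          linear_combination (-4 * μ) * hμ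
        · rw [scng_iff_sd2]
          refine ⟨by simpa [simul] using h1.symm, by simpa [simul] using h1.symm, ?_⟩
          simp only [sd2, Matrix.cons_val_zero, Matrix.cons_val_one, Matrix.head_cons,
            mk4_0, mk4_1, mk4_2, mk4_3]
          rw [hν1, hν2, hν3]
          linear_combination (4 - 4 * μ) * hμ
  · rintro ⟨h1, h2, κ, k1, k2, k3⟩
    refine ⟨h1, h2, fun w ⟨ha, hb⟩ => ?_⟩
    rw [scng_iff_sd2] at ha hb ⊢
    obtain ⟨ha1, ha2, ha3⟩ := ha
    obtain ⟨hb1, hb2, hb3⟩ := hb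
    simp only [simul] at *
    refine ⟨by linarith, by linarith, ?_⟩
    simp only [sd2] at *
    linear_combination (1 - κ) * ha3 + κ * hb3 + (2 * (w 1 1 - w 0 1)) * k1 +
      (2 * (w 1 2 - w 0 2)) * k2 + (2 * (w 1 3 - w 0 3)) * k3

lemma scolp_iff (p q r : Pt) :
    (∃ w : Fin 2 → Pt, SS (w 0) q ∧ simul (w 0) p ∧ SS (w 1) r ∧ simul (w 1) p ∧
      (simul p (w 1) ∧ simul p (w 0) ∧ SColP p (w 0) (w 1))) ↔ SColP p q r := by
  constructor
  · rintro ⟨w, ⟨a1, a2, a3⟩, -, ⟨b1, b2, b3⟩, -, -, -, β, c1, c2, c3⟩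
    exact ⟨β, by rw [← a1, ← b1]; exact c1, by rw [← a2, ← b2]; exact c2,
      by rw [← a3, ← b3]; exact c3⟩
  · rintro ⟨β, c1, c2, c3⟩
    exact ⟨![![p 0, q 1, q 2, q 3], ![p 0, r 1, r 2, r 3] ], ⟨rfl, rfl, rfl⟩, rfl,
      ⟨rfl, rfl, rfl⟩, rfl, rfl, rfl, β, c1, c2, c3⟩

lemma xp_iff (p q r : Pt) :
    (∃ w : Fin 9 → Pt,
      simul (w 0) p ∧ simul (w 1) p ∧ simul (w 2) p ∧ simul (w 3) p ∧ simul (w 4) p ∧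
      SS (w 5) p ∧ simul (w 5) q ∧ lightlike (w 0) (w 5) ∧
      SS (w 6) p ∧ simul (w 6) r ∧ lightlike (w 2) (w 6) ∧
      SS (w 7) q ∧ simul (w 7) p ∧ SS (w 8) r ∧ simul (w 8) p ∧
      spatialCng p (w 1) p (w 8) ∧ spatialCng p (w 3) p (w 7) ∧
      (simul (w 0) (w 1) ∧ simul (w 0) p ∧ SColP (w 0) p (w 1)) ∧
      (simul (w 2) (w 3) ∧ simul (w 2) p ∧ SColP (w 2) p (w 3)) ∧
      spatialCng (w 4) (w 0) (w 4) (w 1) ∧ spatialCng (w 4) (w 0) (w 4) (w 2) ∧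
      spatialCng (w 4) (w 0) (w 4) (w 3)) ↔ XP p q r := by
  constructor
  · rintro ⟨w, hU, hV, hU', hV', hc, ⟨sw1, sw2, sw3⟩, hwq, lUw, ⟨sv1, sv2, sv3⟩, hvr, lU'v,
      ⟨sq1, sq2, sq3⟩, hq'p, ⟨sr1, sr2, sr3⟩, hr'p, cng1, cng2, ⟨-, -, κ, k1, k2, k3⟩,
      ⟨-, -, κ', m1, m2, m3⟩, R1, R2, R3⟩
    simp only [simul] at hU hV hU' hV' hc hwq hvr
    rw [scng_iff_sd2] at cng1 cng2 R1 R2 R3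
    have d3 := cng1.2.2
    have d4 := cng2.2.2
    have R1sd := R1.2.2
    have R2sd := R2.2.2
    have R3sd := R3.2.2
    simp only [lightlike] at lUw lU'v
    -- lengths of the four segments from p
    have eU : (p 0 - q 0) ^ 2 = sd2 (w 0) p := by
      rw [sw1, sw2, sw3, hwq, hU] at lUw
      simp only [sd2]
      linarith [lUw]
    have eU' : (p 0 - r 0) ^ 2 = sd2 (w 2) p := by
      rw [sv1, sv2, sv3, hvr, hU'] at lU'v
      simp only [sd2]
      linarith [lU'v]
    have eV : sd2 (w 1) p = sd2 r p := by
      have h1 : sd2 p (w 8) = sd2 p r := by simp only [sd2]; rw [sr1, sr2, sr3]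
      rw [sd2_comm, d3, h1, sd2_comm]
    have eV' : sd2 (w 3) p = sd2 q p := by
      have h1 : sd2 p (w 7) = sd2 p q := by simp only [sd2]; rw [sq1, sq2, sq3]
      rw [sd2_comm, d4, h1, sd2_comm]
    -- the power of the point p with respect to the sphere around w 4
    have hp1 : p 1 = w 0 1 + κ * (w 1 1 - w 0 1) := by linarith [k1]
    have hp2 : p 2 = w 0 2 + κ * (w 1 2 - w 0 2) := by linarith [k2]
    have hp3 : p 3 = w 0 3 + κ * (w 1 3 - w 0 3) := by linarith [k3]
    have hX1 : 2 * ((w 4 1 - w 0 1) * (w 1 1 - w 0 1) + (w 4 2 - w 0 2) * (w 1 2 - w 0 2) +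
        (w 4 3 - w 0 3) * (w 1 3 - w 0 3)) = sd2 (w 1) (w 0) := by
      simp only [sd2] at R1sd ⊢
      linear_combination R1sd
    have PW1 : (w 0 1 - p 1) * (w 1 1 - p 1) + (w 0 2 - p 2) * (w 1 2 - p 2) +
        (w 0 3 - p 3) * (w 1 3 - p 3) = sd2 (w 4) p - sd2 (w 4) (w 0) := by
      simp only [sd2]
      rw [hp1, hp2, hp3]
      simp only [sd2] at hX1
      linear_combination κ * hX1
    have PW2 : ((w 0 1 - p 1) * (w 1 1 - p 1) + (w 0 2 - p 2) * (w 1 2 - p 2) +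
        (w 0 3 - p 3) * (w 1 3 - p 3)) ^ 2 = sd2 (w 0) p * sd2 (w 1) p := by
      simp only [sd2]
      rw [hp1, hp2, hp3]
      ring
    have hq1 : p 1 = w 2 1 + κ' * (w 3 1 - w 2 1) := by linarith [m1]
    have hq2 : p 2 = w 2 2 + κ' * (w 3 2 - w 2 2) := by linarith [m2]
    have hq3 : p 3 = w 2 3 + κ' * (w 3 3 - w 2 3) := by linarith [m3]
    have R23 : sd2 (w 4) (w 2) = sd2 (w 4) (w 3) := by rw [← R2sd, R3sd]
    have hX2 : 2 * ((w 4 1 - w 2 1) * (w 3 1 - w 2 1) + (w 4 2 - w 2 2) * (w 3 2 - w 2 2) +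
        (w 4 3 - w 2 3) * (w 3 3 - w 2 3)) = sd2 (w 3) (w 2) := by
      simp only [sd2] at R23 ⊢
      linear_combination R23
    have PW1' : (w 2 1 - p 1) * (w 3 1 - p 1) + (w 2 2 - p 2) * (w 3 2 - p 2) +
        (w 2 3 - p 3) * (w 3 3 - p 3) = sd2 (w 4) p - sd2 (w 4) (w 2) := by
      simp only [sd2]
      rw [hq1, hq2, hq3]
      simp only [sd2] at hX2
      linear_combination κ' * hX2
    have PW2' : ((w 2 1 - p 1) * (w 3 1 - p 1) + (w 2 2 - p 2) * (w 3 2 - p 2) +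
        (w 2 3 - p 3) * (w 3 3 - p 3)) ^ 2 = sd2 (w 2) p * sd2 (w 3) p := by
      simp only [sd2]
      rw [hq1, hq2, hq3]
      ring
    have E : sd2 (w 0) p * sd2 (w 1) p = sd2 (w 2) p * sd2 (w 3) p := by
      rw [← PW2, ← PW2', PW1, PW1', R2sd]
    simp only [XP]
    have g1 : (q 0 - p 0) ^ 2 = sd2 (w 0) p := by linear_combination eU
    have g2 : (r 0 - p 0) ^ 2 = sd2 (w 2) p := by linear_combination eU'
    rw [g1, g2, ← eV, ← eV']
    exact E
  · intro hxp
    simp only [XP] at hxp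
    have hdnn : 0 ≤ sd2 r p := by simp only [sd2]; positivity
    have hbnn : 0 ≤ sd2 q p := by simp only [sd2]; positivity
    obtain ⟨a, ha2, ha0⟩ : ∃ a : ℝ, a ^ 2 = (q 0 - p 0) ^ 2 ∧ 0 ≤ a :=
      ⟨|q 0 - p 0|, sq_abs _, abs_nonneg _⟩
    obtain ⟨t, ht2, ht0⟩ : ∃ t : ℝ, t ^ 2 = (r 0 - p 0) ^ 2 ∧ 0 ≤ t :=
      ⟨|r 0 - p 0|, sq_abs _, abs_nonneg _⟩
    obtain ⟨d, hd2, hd0⟩ : ∃ d : ℝ, d ^ 2 = sd2 r p ∧ 0 ≤ d :=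
      ⟨Real.sqrt (sd2 r p), Real.sq_sqrt hdnn, Real.sqrt_nonneg _⟩
    obtain ⟨b, hb2, hb0⟩ : ∃ b : ℝ, b ^ 2 = sd2 q p ∧ 0 ≤ b :=
      ⟨Real.sqrt (sd2 q p), Real.sq_sqrt hbnn, Real.sqrt_nonneg _⟩
    have hadtb : a * d = t * b := by
      have h1 : (a * d) ^ 2 = (t * b) ^ 2 := by
        rw [mul_pow, mul_pow, ha2, hd2, ht2, hb2]
        exact hxp
      calc a * d = Real.sqrt ((a * d) ^ 2) := (Real.sqrt_sq (by positivity)).symm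
        _ = Real.sqrt ((t * b) ^ 2) := by rw [h1]
        _ = t * b := Real.sqrt_sq (by positivity)
    refine ⟨![![p 0, p 1 + a, p 2, p 3], ![p 0, p 1 - d, p 2, p 3],
      ![p 0, p 1, p 2 + t, p 3], ![p 0, p 1, p 2 - b, p 3],
      ![p 0, p 1 + (a - d) / 2, p 2 + (t - b) / 2, p 3],
      ![q 0, p 1, p 2, p 3], ![r 0, p 1, p 2, p 3],
      ![p 0, q 1, q 2, q 3], ![p 0, r 1, r 2, r 3] ], ?_⟩
    simp only [vec9_0, vec9_1, vec9_2, vec9_3, vec9_4, vec9_5, vec9_6, vec9_7, vec9_8]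
    refine ⟨rfl, rfl, rfl, rfl, rfl, ⟨rfl, rfl, rfl⟩, rfl, ?_, ⟨rfl, rfl, rfl⟩, rfl, ?_,
      ⟨rfl, rfl, rfl⟩, rfl, ⟨rfl, rfl, rfl⟩, rfl, ?_, ?_, ⟨rfl, rfl, ?_⟩, ⟨rfl, rfl, ?_⟩,
      ?_, ?_, ?_⟩
    · -- lightlike U W5
      simp only [lightlike, mk4_0, mk4_1, mk4_2, mk4_3]
      linear_combination -ha2
    · -- lightlike U' W6
      simp only [lightlike, mk4_0, mk4_1, mk4_2, mk4_3]
      linear_combination -ht2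
    · -- spatialCng p V p R'
      rw [scng_iff_sd2]
      refine ⟨rfl, rfl, ?_⟩
      simp only [sd2, mk4_0, mk4_1, mk4_2, mk4_3]
      simp only [sd2] at hd2
      linear_combination hd2
    · -- spatialCng p V' p Q'
      rw [scng_iff_sd2]
      refine ⟨rfl, rfl, ?_⟩
      simp only [sd2, mk4_0, mk4_1, mk4_2, mk4_3]
      simp only [sd2] at hb2
      linear_combination hb2
    · -- SColP U p V
      by_cases h0 : a + d = 0
      · have haz : a = 0 := by linarith
        have hdz : d = 0 := by linarith
        refine ⟨0, ?_, ?_, ?_⟩ <;> simp only [mk4_1, mk4_2, mk4_3, haz, hdz] <;> ring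
      · refine ⟨a / (d + a), ?_, ?_, ?_⟩ <;> simp only [mk4_1, mk4_2, mk4_3]
        · have hda : d + a ≠ 0 := fun hc => h0 (by linarith)
          field_simp
          ring
        · ring
        · ring
    · -- SColP U' p V'
      by_cases h0 : t + b = 0
      · have htz : t = 0 := by linarith
        have hbz : b = 0 := by linarith
        refine ⟨0, ?_, ?_, ?_⟩ <;> simp only [mk4_1, mk4_2, mk4_3, htz, hbz] <;> ring
      · refine ⟨t / (b + t), ?_, ?_, ?_⟩ <;> simp only [mk4_1, mk4_2, mk4_3]
        · ring
        · have hbt : b + t ≠ 0 := fun hc => h0 (by linarith)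
          field_simp
          ring
        · ring
    · -- sphere: C U C V
      rw [scng_iff_sd2]
      refine ⟨rfl, rfl, ?_⟩
      simp only [sd2, mk4_0, mk4_1, mk4_2, mk4_3]
      ring
    · -- sphere: C U C U'
      rw [scng_iff_sd2]
      refine ⟨rfl, rfl, ?_⟩
      simp only [sd2, mk4_0, mk4_1, mk4_2, mk4_3]
      linear_combination hadtb
    · -- sphere: C U C V'
      rw [scng_iff_sd2]
      refine ⟨rfl, rfl, ?_⟩
      simp only [sd2, mk4_0, mk4_1, mk4_2, mk4_3]
      linear_combination hadtb

lemma col_iff (p q r : Pt) :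
    (r = p ∨ q = p ∨ ((SColP p q r ∧ XP p q r) ∧ (SColP q r p ∧ XP q r p))) ↔ Col p q r := by
  constructor
  · rintro (hrp | hqp | ⟨⟨⟨β, b1, b2, b3⟩, hxp⟩, ⟨β', c1, c2, c3⟩, hxp'⟩)
    · exact Or.inr hrp
    · exact Or.inl ⟨0, by rw [hqp]; funext i; simp⟩
    · by_cases hrp : r = p
      · exact Or.inr hrp
      by_cases hqp : q = p
      · exact Or.inl ⟨0, by rw [hqp]; funext i; simp⟩
      left
      by_cases hS : sd2 r p = 0
      · obtain ⟨s1, s2, s3⟩ := sq3_zero (show (r 1 - p 1) ^ 2 + (r 2 - p 2) ^ 2 +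
          (r 3 - p 3) ^ 2 = 0 from hS)
        have hr0 : r 0 - p 0 ≠ 0 := fun hc =>
          hrp (pt_ext (by linarith) (by linarith) (by linarith) (by linarith))
        refine ⟨(q 0 - p 0) / (r 0 - p 0), ?_⟩
        funext i
        rw [add_smul_apply]
        fin_cases i
        · show q 0 = p 0 + (q 0 - p 0) / (r 0 - p 0) * (r 0 - p 0)
          field_simp
          ring
        · show q 1 = p 1 + (q 0 - p 0) / (r 0 - p 0) * (r 1 - p 1)
          have h5 : r 1 - p 1 = 0 := by linarith
          rw [h5]; have h6 : q 1 - p 1 = 0 := by rw [b1, h5]; ring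
          linarith [h6]
        · show q 2 = p 2 + (q 0 - p 0) / (r 0 - p 0) * (r 2 - p 2)
          have h5 : r 2 - p 2 = 0 := by linarith
          rw [h5]; have h6 : q 2 - p 2 = 0 := by rw [b2, h5]; ring
          linarith [h6]
        · show q 3 = p 3 + (q 0 - p 0) / (r 0 - p 0) * (r 3 - p 3)
          have h5 : r 3 - p 3 = 0 := by linarith
          rw [h5]; have h6 : q 3 - p 3 = 0 := by rw [b3, h5]; ring
          linarith [h6]
      · -- main case
        have hsd : sd2 q p = β ^ 2 * sd2 r p := by
          simp only [sd2]; rw [b1, b2, b3]; ring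
        have h2 : (q 0 - p 0) ^ 2 = β ^ 2 * (r 0 - p 0) ^ 2 := by
          simp only [XP] at hxp
          rw [hsd] at hxp
          have h3 : ((q 0 - p 0) ^ 2 - β ^ 2 * (r 0 - p 0) ^ 2) * sd2 r p = 0 := by
            linear_combination hxp
          rcases mul_eq_zero.1 h3 with h4 | h4
          · linarith
          · exact absurd h4 hS
        by_cases hpm : q 0 - p 0 = β * (r 0 - p 0)
        · refine ⟨β, ?_⟩
          funext i
          rw [add_smul_apply]
          fin_cases i
          · show q 0 = p 0 + β * (r 0 - p 0); linarith
          · show q 1 = p 1 + β * (r 1 - p 1); linarith [b1]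
          · show q 2 = p 2 + β * (r 2 - p 2); linarith [b2]
          · show q 3 = p 3 + β * (r 3 - p 3); linarith [b3]
        · exfalso
          have hneg : q 0 - p 0 = -(β * (r 0 - p 0)) := by
            have h4 : (q 0 - p 0 - β * (r 0 - p 0)) * (q 0 - p 0 + β * (r 0 - p 0)) = 0 := by
              linear_combination h2
            rcases mul_eq_zero.1 h4 with h5 | h5
            · exact absurd (by linarith) hpm
            · linarith
          have hβ0 : β ≠ 0 := by
            intro h5
            apply hqp
            have hb1 := b1; have hb2 := b2; have hb3 := b3; have hn := hneg
            rw [h5] at hb1 hb2 hb3 hn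
            exact pt_ext (by linarith [hn]) (by linarith [hb1]) (by linarith [hb2])
              (by linarith [hb3])
          have hr0 : r 0 - p 0 ≠ 0 := by
            intro h5
            have h6 : q 0 - p 0 = 0 := by rw [hneg, h5]; ring
            exact hpm (by rw [h6, h5]; ring)
          have hA : r 0 - q 0 = (1 + β) * (r 0 - p 0) := by linarith
          have hB : p 0 - q 0 = β * (r 0 - p 0) := by linarith
          have hC : sd2 p q = β ^ 2 * sd2 r p := by
            simp only [sd2] at hsd ⊢; linarith [hsd]
          have hD : sd2 r q = (1 - β) ^ 2 * sd2 r p := by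
            simp only [sd2]
            have f1 : r 1 - q 1 = (1 - β) * (r 1 - p 1) := by linarith [b1]
            have f2 : r 2 - q 2 = (1 - β) * (r 2 - p 2) := by linarith [b2]
            have f3 : r 3 - q 3 = (1 - β) * (r 3 - p 3) := by linarith [b3]
            rw [f1, f2, f3]; ring
          simp only [XP] at hxp'
          rw [hA, hB, hC, hD] at hxp'
          have h9 : β ^ 3 * ((r 0 - p 0) ^ 2 * sd2 r p) = 0 := by linear_combination hxp' / 4
          have hS' : 0 < sd2 r p :=
            lt_of_le_of_ne (by simp only [sd2]; positivity) (Ne.symm hS)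
          have hr' : 0 < (r 0 - p 0) ^ 2 :=
            lt_of_le_of_ne (sq_nonneg _) (Ne.symm (pow_ne_zero 2 hr0))
          have h10 : β ^ 3 = 0 := by
            rcases mul_eq_zero.1 h9 with h11 | h11
            · exact h11
            · nlinarith [hS', hr']
          exact hβ0 (pow_eq_zero_iff (by norm_num)|>.1 h10)
  · rintro (⟨a, ha⟩ | hrp)
    · have hcomp : ∀ i, q i = p i + a * (r i - p i) := fun i => by rw [ha, add_smul_apply]
      by_cases hqp : q = p
      · exact Or.inr (Or.inl hqp)
      right; right
      have ha0 : a ≠ 0 := by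
        intro h5
        apply hqp
        refine pt_ext ?_ ?_ ?_ ?_ <;> · have := hcomp; rw [h5] at this
                                        first
                                        | linarith [this 0]
                                        | linarith [this 1]
                                        | linarith [this 2]
                                        | linarith [this 3]
      have e0 : q 0 - p 0 = a * (r 0 - p 0) := by linarith [hcomp 0]
      have e1 : q 1 - p 1 = a * (r 1 - p 1) := by linarith [hcomp 1]
      have e2 : q 2 - p 2 = a * (r 2 - p 2) := by linarith [hcomp 2]
      have e3 : q 3 - p 3 = a * (r 3 - p 3) := by linarith [hcomp 3]
      refine ⟨⟨⟨a, e1, e2, e3⟩, ?_⟩, ⟨(a - 1) / a, ?_, ?_, ?_⟩, ?_⟩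
      · simp only [XP, sd2]
        rw [e0, e1, e2, e3]; ring
      · rw [show p 1 - q 1 = -(a * (r 1 - p 1)) by linarith [e1] ]
        field_simp
        linear_combination (-1 : ℝ) * e1
      · rw [show p 2 - q 2 = -(a * (r 2 - p 2)) by linarith [e2] ]
        field_simp
        linear_combination (-1 : ℝ) * e2
      · rw [show p 3 - q 3 = -(a * (r 3 - p 3)) by linarith [e3] ]
        field_simp
        linear_combination (-1 : ℝ) * e3
      · simp only [XP, sd2]
        rw [show r 0 - q 0 = (1 - a) * (r 0 - p 0) by linarith [e0],
          show p 0 - q 0 = -(a * (r 0 - p 0)) by linarith [e0],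
          show p 1 - q 1 = -(a * (r 1 - p 1)) by linarith [e1],
          show p 2 - q 2 = -(a * (r 2 - p 2)) by linarith [e2],
          show p 3 - q 3 = -(a * (r 3 - p 3)) by linarith [e3],
          show r 1 - q 1 = (1 - a) * (r 1 - p 1) by linarith [e1],
          show r 2 - q 2 = (1 - a) * (r 2 - p 2) by linarith [e2],
          show r 3 - q 3 = (1 - a) * (r 3 - p 3) by linarith [e3] ]
        ring
    · exact Or.inl hrp

lemma scng_self_iff (p q : Pt) : spatialCng p q p q ↔ simul p q :=
  ⟨fun h => h.1, fun h => ⟨h, h, rfl⟩⟩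

/-! ### First-order formulas over the classical language -/

section ClassFormulas

attribute [local instance] classStr

lemma relMap_S (v : Fin 2 → Pt) :
    Structure.RelMap (L := classLang) (M := Pt) (Sum.inl ⟨rfl⟩) v ↔ simul (v 0) (v 1) := Iff.rfl
lemma relMap_L (v : Fin 2 → Pt) :
    Structure.RelMap (L := classLang) (M := Pt) (Sum.inr ⟨rfl⟩) v ↔ lightlike (v 0) (v 1) :=
  Iff.rfl

/-- atom: simultaneity -/
def sF {α : Type} (i j : α) : classLang.Formula α :=
  Relations.formula (Sum.inl ⟨rfl⟩) ![Term.var i, Term.var j]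
/-- atom: lightlike relatedness -/
def lF {α : Type} (i j : α) : classLang.Formula α :=
  Relations.formula (Sum.inr ⟨rfl⟩) ![Term.var i, Term.var j]
/-- atom: equality -/
def eF {α : Type} (i j : α) : classLang.Formula α := Term.equal (Term.var i) (Term.var j)

@[simp] lemma realize_sF {α : Type} (i j : α) (v : α → Pt) :
    (sF i j).Realize v ↔ simul (v i) (v j) := by
  rw [sF]; exact Formula.realize_rel.trans (relMap_S _)
@[simp] lemma realize_lF {α : Type} (i j : α) (v : α → Pt) :
    (lF i j).Realize v ↔ lightlike (v i) (v j) := by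
  rw [lF]; exact Formula.realize_rel.trans (relMap_L _)
@[simp] lemma realize_eF {α : Type} (i j : α) (v : α → Pt) :
    (eF i j).Realize v ↔ v i = v j := by
  rw [eF]; simp [Term.equal, Formula.Realize]

/-- Formula for `SS`. -/
noncomputable def ssF : classLang.Formula (Fin 2) :=
  eF 0 1 ⊔ ((sF 0 1).not ⊓ Formula.iAlls (Fin 2)
    (((lF (.inr 0) (.inl 0) ⊓ lF (.inr 0) (.inl 1)) ⊓
      (lF (.inr 1) (.inl 0) ⊓ lF (.inr 1) (.inl 1))).imp (sF (.inr 0) (.inr 1))))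

@[simp] lemma realize_ssF (v : Fin 2 → Pt) : ssF.Realize v ↔ SS (v 0) (v 1) := by
  rw [← ss_iff]
  simp only [ssF, Formula.realize_sup, realize_eF, Formula.realize_inf, Formula.realize_not,
    realize_sF, Formula.realize_iAlls, Formula.realize_imp, realize_lF, id_eq, Sum.elim_inl,
    Sum.elim_inr]

/-- Formula for `TMid`. -/
noncomputable def tmidF : classLang.Formula (Fin 3) :=
  Formula.iExs (Fin 3)
    ((ssF.relabel ![.inr 0, .inl 1]) ⊓ sF (.inr 0) (.inl 0) ⊓
     (ssF.relabel ![.inr 1, .inl 1]) ⊓ sF (.inr 1) (.inl 2) ⊓ sF (.inr 2) (.inl 1) ⊓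
     lF (.inr 2) (.inr 0) ⊓ lF (.inr 2) (.inr 1) ⊓
     ((sF (.inr 0) (.inr 1)).imp (sF (.inr 0) (.inl 1))))

@[simp] lemma realize_tmidF (v : Fin 3 → Pt) : tmidF.Realize v ↔ TMid (v 0) (v 1) (v 2) := by
  rw [← tmid_iff]
  simp only [tmidF, Formula.realize_iExs, Formula.realize_inf, Formula.realize_relabel,
    realize_ssF, realize_sF, realize_lF, Formula.realize_imp, id_eq, Sum.elim_inl, Sum.elim_inr,
    Function.comp_apply, Matrix.cons_val_zero, Matrix.cons_val_one, Matrix.head_cons]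
  exact exists_congr fun i => by tauto

/-- Formula for `temporalCng`. -/
noncomputable def tcngF : classLang.Formula (Fin 4) :=
  Formula.iExs (Fin 1)
    ((tmidF.relabel ![.inl 0, .inr 0, .inl 3]) ⊓ (tmidF.relabel ![.inl 1, .inr 0, .inl 2]))

@[simp] lemma realize_tcngF (v : Fin 4 → Pt) :
    tcngF.Realize v ↔ temporalCng (v 0) (v 1) (v 2) (v 3) := by
  rw [← tcng_iff]
  simp only [tcngF, Formula.realize_iExs, Formula.realize_inf, Formula.realize_relabel,
    realize_tmidF, id_eq, Sum.elim_inl, Sum.elim_inr, Function.comp_apply, Matrix.cons_val_zero,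
    Matrix.cons_val_one, Matrix.head_cons, Matrix.cons_val_two, Matrix.cons_val_three,
    Matrix.tail_cons]

/-- Formula for `spatialCng`. -/
noncomputable def scngF : classLang.Formula (Fin 4) :=
  sF 0 1 ⊓ sF 2 3 ⊓ Formula.iExs (Fin 3)
    ((ssF.relabel ![.inr 0, .inl 0]) ⊓ lF (.inr 0) (.inl 1) ⊓
     (ssF.relabel ![.inr 1, .inl 2]) ⊓ lF (.inr 1) (.inl 3) ⊓
     (((tmidF.relabel ![.inr 0, .inr 2, .inr 1]) ⊓ (tmidF.relabel ![.inl 0, .inr 2, .inl 2])) ⊔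
      ((tmidF.relabel ![.inr 0, .inr 2, .inl 2]) ⊓ (tmidF.relabel ![.inl 0, .inr 2, .inr 1]))))

@[simp] lemma realize_scngF (v : Fin 4 → Pt) :
    scngF.Realize v ↔ spatialCng (v 0) (v 1) (v 2) (v 3) := by
  rw [← scng_iff]
  simp only [scngF, Formula.realize_inf, Formula.realize_iExs, Formula.realize_relabel,
    Formula.realize_sup, realize_ssF, realize_sF, realize_lF, realize_tmidF, id_eq, Sum.elim_inl,
    Sum.elim_inr, Function.comp_apply, Matrix.cons_val_zero, Matrix.cons_val_one, Matrix.head_cons,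
    Matrix.cons_val_two, Matrix.cons_val_three, Matrix.tail_cons]
  rw [and_assoc]
  exact and_congr_right fun _ => and_congr_right fun _ => exists_congr fun i => by tauto

/-- Formula for spatial collinearity of simultaneous triples. -/
noncomputable def scol3F : classLang.Formula (Fin 3) :=
  sF 0 1 ⊓ sF 0 2 ⊓ Formula.iAlls (Fin 2)
    ((((scngF.relabel ![.inl 0, .inr 0, .inl 0, .inr 1]) ⊓
       (scngF.relabel ![.inl 1, .inr 0, .inl 1, .inr 1]))).imp
      (scngF.relabel ![.inl 2, .inr 0, .inl 2, .inr 1]))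

@[simp] lemma realize_scol3F (v : Fin 3 → Pt) :
    scol3F.Realize v ↔ (simul (v 0) (v 1) ∧ simul (v 0) (v 2) ∧ SColP (v 0) (v 2) (v 1)) := by
  rw [← scol3_iff]
  simp only [scol3F, Formula.realize_inf, Formula.realize_iAlls, Formula.realize_imp,
    Formula.realize_relabel, realize_sF, realize_scngF, id_eq, Sum.elim_inl, Sum.elim_inr,
    Function.comp_apply, Matrix.cons_val_zero, Matrix.cons_val_one, Matrix.head_cons,
    Matrix.cons_val_two, Matrix.cons_val_three, Matrix.tail_cons]
  rw [and_assoc]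

/-- Formula for `SColP` (collinearity of the spatial projections). -/
noncomputable def scolpF : classLang.Formula (Fin 3) :=
  Formula.iExs (Fin 2)
    ((ssF.relabel ![.inr 0, .inl 1]) ⊓ sF (.inr 0) (.inl 0) ⊓
     (ssF.relabel ![.inr 1, .inl 2]) ⊓ sF (.inr 1) (.inl 0) ⊓
     (scol3F.relabel ![.inl 0, .inr 1, .inr 0]))

@[simp] lemma realize_scolpF (v : Fin 3 → Pt) :
    scolpF.Realize v ↔ SColP (v 0) (v 1) (v 2) := by
  rw [← scolp_iff]
  simp only [scolpF, Formula.realize_iExs, Formula.realize_inf, Formula.realize_relabel,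
    realize_ssF, realize_sF, realize_scol3F, id_eq, Sum.elim_inl, Sum.elim_inr,
    Function.comp_apply, Matrix.cons_val_zero, Matrix.cons_val_one, Matrix.head_cons,
    Matrix.cons_val_two, Matrix.tail_cons]
  exact exists_congr fun i => by tauto

/-- Formula for `XP`. -/
noncomputable def xpF : classLang.Formula (Fin 3) :=
  Formula.iExs (Fin 9)
    (sF (.inr 0) (.inl 0) ⊓ sF (.inr 1) (.inl 0) ⊓ sF (.inr 2) (.inl 0) ⊓
     sF (.inr 3) (.inl 0) ⊓ sF (.inr 4) (.inl 0) ⊓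
     (ssF.relabel ![.inr 5, .inl 0]) ⊓ sF (.inr 5) (.inl 1) ⊓ lF (.inr 0) (.inr 5) ⊓
     (ssF.relabel ![.inr 6, .inl 0]) ⊓ sF (.inr 6) (.inl 2) ⊓ lF (.inr 2) (.inr 6) ⊓
     (ssF.relabel ![.inr 7, .inl 1]) ⊓ sF (.inr 7) (.inl 0) ⊓
     (ssF.relabel ![.inr 8, .inl 2]) ⊓ sF (.inr 8) (.inl 0) ⊓
     (scngF.relabel ![.inl 0, .inr 1, .inl 0, .inr 8]) ⊓
     (scngF.relabel ![.inl 0, .inr 3, .inl 0, .inr 7]) ⊓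
     (scol3F.relabel ![.inr 0, .inr 1, .inl 0]) ⊓
     (scol3F.relabel ![.inr 2, .inr 3, .inl 0]) ⊓
     (scngF.relabel ![.inr 4, .inr 0, .inr 4, .inr 1]) ⊓
     (scngF.relabel ![.inr 4, .inr 0, .inr 4, .inr 2]) ⊓
     (scngF.relabel ![.inr 4, .inr 0, .inr 4, .inr 3]))

@[simp] lemma realize_xpF (v : Fin 3 → Pt) : xpF.Realize v ↔ XP (v 0) (v 1) (v 2) := by
  rw [← xp_iff]
  simp only [xpF, Formula.realize_iExs, Formula.realize_inf, Formula.realize_relabel,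
    realize_ssF, realize_sF, realize_lF, realize_scngF, realize_scol3F, id_eq, Sum.elim_inl,
    Sum.elim_inr, Function.comp_apply, Matrix.cons_val_zero, Matrix.cons_val_one, Matrix.head_cons,
    Matrix.cons_val_two, Matrix.cons_val_three, Matrix.tail_cons, Matrix.cons_val_four]
  exact exists_congr fun i => by tauto

/-- Formula for `Col`. -/
noncomputable def colF : classLang.Formula (Fin 3) :=
  eF 2 0 ⊔ eF 1 0 ⊔
    ((scolpF ⊓ xpF) ⊓
     ((scolpF.relabel ![1, 2, 0]) ⊓ (xpF.relabel ![1, 2, 0])))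

@[simp] lemma realize_colF (v : Fin 3 → Pt) : colF.Realize v ↔ Col (v 0) (v 1) (v 2) := by
  rw [← col_iff]
  simp only [colF, Formula.realize_sup, realize_eF, Formula.realize_inf, Formula.realize_relabel,
    realize_scolpF, realize_xpF, Function.comp_apply, Matrix.cons_val_zero, Matrix.cons_val_one,
    Matrix.head_cons, Matrix.cons_val_two, Matrix.tail_cons]
  tauto

/-- The four Galilean primitives are concepts of LClassST. -/
lemma con_scng : ConOf classLang classStr {v : Fin 4 → Pt | spatialCng (v 0) (v 1) (v 2) (v 3)} :=
  Set.empty_definable_iff.2 ⟨scngF, Set.ext fun v => (realize_scngF v).symm⟩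

lemma con_tcng : ConOf classLang classStr
    {v : Fin 4 → Pt | temporalCng (v 0) (v 1) (v 2) (v 3)} :=
  Set.empty_definable_iff.2 ⟨tcngF, Set.ext fun v => (realize_tcngF v).symm⟩

lemma con_col : ConOf classLang classStr {v : Fin 3 → Pt | Col (v 0) (v 1) (v 2)} :=
  Set.empty_definable_iff.2 ⟨colF, Set.ext fun v => (realize_colF v).symm⟩

lemma con_ll : ConOf classLang classStr {v : Fin 2 → Pt | lightlike (v 0) (v 1)} :=
  Set.empty_definable_iff.2 ⟨lF 0 1, Set.ext fun v => (realize_lF 0 1 v).symm⟩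

end ClassFormulas

/-! ### The classical primitives are concepts of GalST extended with λ -/

section GalFormulas

attribute [local instance] galStr

lemma con_simul_gal : ConOf galLang galStr {v : Fin 2 → Pt | simul (v 0) (v 1)} := by
  refine Set.empty_definable_iff.2
    ⟨Relations.formula (Sum.inl (Sum.inl ⟨rfl⟩)) ![Term.var 0, Term.var 1, Term.var 0, Term.var 1],
      ?_⟩
  ext v
  rw [mem_setOf_eq, mem_setOf_eq]
  exact (scng_self_iff (v 0) (v 1)).symm

lemma con_ll_gal : ConOf galLang galStr {v : Fin 2 → Pt | lightlike (v 0) (v 1)} := by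
  refine Set.empty_definable_iff.2
    ⟨Relations.formula (Sum.inr (Sum.inr ⟨rfl⟩)) ![Term.var 0, Term.var 1], ?_⟩
  ext v
  rw [mem_setOf_eq, mem_setOf_eq]
  exact Iff.rfl

end GalFormulas

/-! ### Main theorem -/

/-- Galilean spacetime extended with lightlike relatedness is definitionally
equivalent to late classical spacetime: ⟨GalST, λ⟩ and LClassST = ⟨ℝ⁴, S, λ⟩ have
exactly the same concepts. -/
theorem galST_lightlike_defEquiv_lclassST :
    ∀ (n : ℕ) (R : Set (Fin n → Pt)),
      ConOf galLang galStr R ↔ ConOf classLang classStr R := by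
  intro n R
  constructor
  · refine concept_transfer galStr classStr (fun _ f => f) (fun m R => ?_) R
    rcases R with (R | R) | (R | R) <;> obtain ⟨rfl⟩ := R
    · exact con_scng
    · exact con_tcng
    · exact con_col
    · exact con_ll
  · refine concept_transfer classStr galStr (fun _ f => f) (fun m R => ?_) R
    rcases R with R | R <;> obtain ⟨rfl⟩ := R
    · exact con_simul_gal
    · exact con_ll_gal
end vec9
end
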